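/- arXiv:1303.0499 — 5 statements merged into one kernel-verified Lean document; each statement's English description precedes it below -/
import Mathlib

section
/- Let w be analytic on the open unit disk 𝔻 with w(0)=0. If |w| attains its maximum over the closed disk {z : |z| ≤ r} (for some 0 < r < 1) at a point z₀ with |z₀| = r, then z₀·w'(z₀) = k·w(z₀) for some real number k ≥ 1. -/
open Complex Metric Filter Topology

/-- derivative of `t ↦ normSq (v t)` for a real-to-complex function. -/
lemma hasDerivAt_normSq_comp {v : ℝ → ℂ} {v' : ℂ} {t : ℝ} (hv : HasDerivAt v v' t) :
    HasDerivAt (fun s => Complex.normSq (v s))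
      (2 * ((starRingEnd ℂ) (v t) * v').re) t := by
  have hre : HasDerivAt (fun s => (v s).re) v'.re t := by
    exact Complex.reCLM.hasFDerivAt.comp_hasDerivAt t hv
  have him : HasDerivAt (fun s => (v s).im) v'.im t := by
    exact Complex.imCLM.hasFDerivAt.comp_hasDerivAt t hv
  have key := (hre.mul hre).add (him.mul him)
  have hfun : (fun s => Complex.normSq (v s))
      = fun s => (v s).re * (v s).re + (v s).im * (v s).im := by
    funext s; simp [Complex.normSq_apply]
  rw [hfun]
  convert key using 1
  case e'_9 => simp [Complex.mul_re]; ring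
  all_goals rfl

theorem jack_lemma (w : ℂ → ℂ)
    (hw : DifferentiableOn ℂ w (ball (0:ℂ) 1))
    (hw0 : w 0 = 0) (r : ℝ) (hr0 : 0 < r) (hr1 : r < 1)
    (z₀ : ℂ) (hz₀ : ‖z₀‖ = r)
    (hmax : ∀ z : ℂ, ‖z‖ ≤ r → ‖w z‖ ≤ ‖w z₀‖) :
    ∃ k : ℝ, 1 ≤ k ∧ z₀ * deriv w z₀ = (k : ℂ) * w z₀ := by
  have hz₀mem : z₀ ∈ ball (0:ℂ) 1 := by
    simp [Metric.mem_ball, dist_eq_norm, hz₀, hr1]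
  by_cases hB0 : w z₀ = 0
  · -- degenerate case : w is identically zero near z₀
    refine ⟨1, le_refl 1, ?_⟩
    have hzero : Set.EqOn w 0 (ball (0:ℂ) 1) := by
      apply (hw.analyticOnNhd isOpen_ball).eqOn_zero_of_preconnected_of_eventuallyEq_zero
        (convex_ball _ _).isPreconnected (mem_ball_self one_pos)
      have hb : ball (0:ℂ) r ∈ 𝓝 (0:ℂ) := isOpen_ball.mem_nhds (mem_ball_self hr0)
      filter_upwards [hb] with z hz
      have h1 := hmax z (le_of_lt (by simpa [Metric.mem_ball, dist_eq_norm] using hz))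
      rw [hB0] at h1
      have h0 : ‖w z‖ ≤ 0 := by simpa using h1
      simpa using norm_le_zero_iff.mp h0
    have hd0 : deriv w z₀ = 0 := by
      have hev : w =ᶠ[𝓝 z₀] (fun _ => 0) := by
        filter_upwards [isOpen_ball.mem_nhds hz₀mem] with z hz using hzero hz
      rw [hev.deriv_eq]; simp
    simp [hd0, hB0]
  -- main case
  set M : ℝ := ‖w z₀‖ with hM
  have hM0 : 0 < M := norm_pos_iff.mpr hB0
  have hwz₀ : HasDerivAt w (deriv w z₀) z₀ :=
    (hw.differentiableAt (isOpen_ball.mem_nhds hz₀mem)).hasDerivAt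
  set W : ℂ := deriv w z₀ with hW
  set A : ℂ := z₀ * W with hA
  set B : ℂ := w z₀ with hBdef
  -- Schwarz lemma: ‖w z‖ ≤ M / r * ‖z‖ on ball 0 r
  have schwarz : ∀ z : ℂ, ‖z‖ < r → ‖w z‖ ≤ M / r * ‖z‖ := by
    intro z hz
    have hzr : z ∈ ball (0:ℂ) r := by simpa [Metric.mem_ball, dist_eq_norm] using hz
    have hsub : ball (0:ℂ) r ⊆ ball (0:ℂ) 1 := ball_subset_ball (le_of_lt hr1)
    have key : ∀ ε : ℝ, 0 < ε → ‖w z‖ ≤ (M + ε) / r * ‖z‖ := by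
      intro ε hε
      have hmaps : Set.MapsTo w (ball (0:ℂ) r) (closedBall (w 0) (M + ε)) := by
        intro x hx
        have hle : ‖w x‖ ≤ M :=
          hmax x (le_of_lt (by simpa [Metric.mem_ball, dist_eq_norm] using hx))
        simp only [Metric.mem_closedBall, dist_eq_norm, hw0, sub_zero]
        linarith
      have := Complex.dist_le_div_mul_dist_of_mapsTo_ball (hw.mono hsub) hmaps hzr
      simpa [dist_eq_norm, hw0] using this
    rcases eq_or_ne z 0 with rfl | hzne
    · simp [hw0]
    have hz0 : 0 < ‖z‖ := norm_pos_iff.mpr hzne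
    apply le_of_forall_pos_le_add
    intro ε hε
    have h1 := key (ε * r / ‖z‖) (by positivity)
    calc ‖w z‖ ≤ (M + ε * r / ‖z‖) / r * ‖z‖ := h1
      _ = M / r * ‖z‖ + ε := by
          have hzne' : ‖z‖ ≠ 0 := by
            positivity
          field_simp
  -- Step C : Im (A * conj B) = 0
  have himA : (A * (starRingEnd ℂ) B).im = 0 := by
    set θ₀ : ℝ := Complex.arg z₀ with hθ₀
    have hc0 : (r : ℂ) * Complex.exp (θ₀ * Complex.I) = z₀ := by
      rw [← hz₀]; exact_mod_cast Complex.norm_mul_exp_arg_mul_I z₀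
    set c : ℝ → ℂ := fun s : ℝ => (r : ℂ) * Complex.exp (s * Complex.I) with hc
    have hcd : ∀ θ : ℝ, HasDerivAt c ((r : ℂ) * Complex.exp (θ * Complex.I) * Complex.I) θ := by
      intro θ
      have h1 : HasDerivAt (fun s : ℝ => (s : ℂ) * Complex.I) Complex.I θ := by
        simpa using (Complex.ofRealCLM.hasDerivAt (x := θ)).mul_const Complex.I
      have h2 := (h1.cexp).const_mul (r : ℂ)
      rw [hc]
      convert h2 using 1
      case e'_9 => ring
      all_goals rfl
    have hcnorm : ∀ θ : ℝ, ‖c θ‖ = r := by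
      intro θ
      simp [hc, norm_mul, Complex.norm_exp_ofReal_mul_I,
        Complex.norm_real, abs_of_pos hr0]
    have hwc : HasDerivAt (fun θ : ℝ => w (c θ)) ((z₀ * Complex.I) • W) θ₀ := by
      have hw' : HasDerivAt w W (c θ₀) := by
        rw [show c θ₀ = z₀ from hc0]; exact hwz₀
      have h := hw'.scomp θ₀ (hcd θ₀)
      have heq : (r : ℂ) * Complex.exp (θ₀ * Complex.I) * Complex.I = z₀ * Complex.I := by
        rw [hc0]
      rw [heq] at h
      exact h
    have hG : HasDerivAt (fun θ : ℝ => Complex.normSq (w (c θ)))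
        (2 * ((starRingEnd ℂ) B * ((z₀ * Complex.I) • W)).re) θ₀ := by
      have h := hasDerivAt_normSq_comp hwc
      rwa [show c θ₀ = z₀ from hc0] at h
    have hGmax : IsLocalMax (fun θ : ℝ => Complex.normSq (w (c θ))) θ₀ := by
      apply Filter.Eventually.of_forall
      intro θ
      have h1 : ‖w (c θ)‖ ≤ ‖w (c θ₀)‖ := by
        rw [show c θ₀ = z₀ from hc0]; exact hmax _ (le_of_eq (hcnorm θ))
      simpa [Complex.normSq_eq_norm_sq] using
        pow_le_pow_left₀ (norm_nonneg _) h1 2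
    have h0 := hGmax.hasDerivAt_eq_zero hG
    rw [smul_eq_mul] at h0
    have h2 : ((starRingEnd ℂ) B * (z₀ * Complex.I * W)).re = 0 := by linarith
    have h3 : (Complex.I * (A * (starRingEnd ℂ) B)).re = 0 := by
      rw [← h2]; congr 1; rw [hA]; ring
    rw [Complex.mul_re, Complex.I_re, Complex.I_im] at h3
    linarith
  -- Step D : Re (A * conj B) ≥ M ^ 2
  have hreA : M ^ 2 ≤ (A * (starRingEnd ℂ) B).re := by
    set v : ℝ → ℂ := fun t : ℝ => w ((t : ℂ) * z₀) with hv
    have hvd : HasDerivAt v (z₀ • W) 1 := by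
      have h1 : HasDerivAt (fun t : ℝ => (t : ℂ) * z₀) z₀ 1 := by
        simpa using (Complex.ofRealCLM.hasDerivAt (x := (1:ℝ))).mul_const z₀
      have hw' : HasDerivAt w W (((1:ℝ) : ℂ) * z₀) := by norm_num; exact hwz₀
      have h := hw'.scomp 1 h1
      exact h
    set φ : ℝ → ℝ := fun t => M ^ 2 * t ^ 2 - Complex.normSq (v t) with hφ
    have hφd : HasDerivAt φ (M ^ 2 * 2 - 2 * ((starRingEnd ℂ) B * (z₀ • W)).re) 1 := by
      have h1 : HasDerivAt (fun t : ℝ => M ^ 2 * t ^ 2) (M ^ 2 * 2) 1 := by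
        simpa using (((hasDerivAt_id (1:ℝ)).pow 2).const_mul (M ^ 2))
      have h2 := hasDerivAt_normSq_comp hvd
      have hv1 : v 1 = B := by simp [hv, hBdef]
      rw [hv1] at h2
      exact h1.sub h2
    have hφnonneg : ∀ t : ℝ, t ∈ Set.Ioo (0:ℝ) 1 → 0 ≤ φ t := by
      intro t ht
      have hnn : ‖(t : ℂ) * z₀‖ = t * r := by
        simp [hz₀, abs_of_pos ht.1]
      have hlt : ‖(t : ℂ) * z₀‖ < r := by
        rw [hnn]; nlinarith [ht.1, ht.2]
      have hs := schwarz _ hlt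
      rw [hnn] at hs
      have hb : ‖v t‖ ≤ M * t := by
        rw [hv]
        calc ‖w ((t:ℂ) * z₀)‖ ≤ M / r * (t * r) := hs
          _ = M * t := by field_simp
      have hsq : Complex.normSq (v t) ≤ (M * t) ^ 2 := by
        rw [Complex.normSq_eq_norm_sq]
        exact pow_le_pow_left₀ (norm_nonneg _) hb 2
      simp only [hφ]
      nlinarith
    have hφ1 : φ 1 = 0 := by
      have hv1 : v 1 = B := by simp [hv, hBdef]
      simp only [hφ, hv1, Complex.normSq_eq_norm_sq, ← hM]
      ring
    have hd_le : M ^ 2 * 2 - 2 * ((starRingEnd ℂ) B * (z₀ • W)).re ≤ 0 := by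
      have h2 := hasDerivWithinAt_iff_tendsto_slope.mp
        (hφd.hasDerivWithinAt (s := Set.Iio (1:ℝ)))
      rw [Set.diff_singleton_eq_self (by simp)] at h2
      refine le_of_tendsto h2 ?_
      have hmem : Set.Ioo (0:ℝ) 1 ∈ 𝓝[<] (1:ℝ) :=
        Ioo_mem_nhdsLT_of_mem (by constructor <;> norm_num)
      filter_upwards [hmem] with t ht
      rw [slope_def_field, hφ1, sub_zero]
      apply div_nonpos_of_nonneg_of_nonpos (hφnonneg t ht)
      linarith [ht.2]
    have heq : (starRingEnd ℂ) B * (z₀ • W) = A * (starRingEnd ℂ) B := by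
      rw [smul_eq_mul, hA]; ring
    rw [heq] at hd_le
    linarith
  -- conclude
  have hnormSqB : Complex.normSq B = M ^ 2 := by
    rw [Complex.normSq_eq_norm_sq, hM]
  refine ⟨(A * (starRingEnd ℂ) B).re / M ^ 2, ?_, ?_⟩
  · rw [le_div_iff₀ (by positivity)]; linarith
  · have hABre : A * (starRingEnd ℂ) B = (((A * (starRingEnd ℂ) B).re : ℝ) : ℂ) := by
      apply Complex.ext <;> simp [himA]
    have hBB : (starRingEnd ℂ) B * B = ((M ^ 2 : ℝ) : ℂ) := by
      rw [← hnormSqB, mul_comm, Complex.mul_conj]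
    have key : A * ((M ^ 2 : ℝ) : ℂ) = (((A * (starRingEnd ℂ) B).re : ℝ) : ℂ) * B := by
      rw [← hBB, ← mul_assoc, hABre, Complex.ofReal_re]
    have hM2 : ((M ^ 2 : ℝ) : ℂ) ≠ 0 := by
      simp only [ne_eq, Complex.ofReal_eq_zero]
      positivity
    rw [Complex.ofReal_div, div_mul_eq_mul_div, eq_div_iff hM2]
    exact key
end

section
/- Let f be analytic on the open unit disk 𝔻 with f(0)=0 and f'(0)=1. Suppose there exist real numbers β ≥ 0, γ ≥ 0 and δ > -1/2 such that for all z ∈ 𝔻, |f'(z) - 1|^β · |δ + z·f''(z)/f'(z)|^γ < ((1+2δ)/2)^γ (with f'(z) ≠ 0 wherever the quotient appears). Then |f'(z) - 1| < 1 for all z ∈ 𝔻. -/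
open Complex Metric

private lemma normSq_hasDerivAt' {G : ℝ → ℂ} {G' : ℂ} {t : ℝ} (h : HasDerivAt G G' t) :
    HasDerivAt (fun s => Complex.normSq (G s)) (2 * ((starRingEnd ℂ) (G t) * G').re) t := by
  have hre := (Complex.reCLM.hasFDerivAt.comp t h.hasFDerivAt).hasDerivAt
  have him := (Complex.imCLM.hasFDerivAt.comp t h.hasFDerivAt).hasDerivAt
  simp only [ContinuousLinearMap.coe_comp', Function.comp, ContinuousLinearMap.smulRight_apply,
    ContinuousLinearMap.one_apply, one_smul, reCLM_apply, imCLM_apply,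
    ContinuousLinearMap.toSpanSingleton_apply] at hre him
  have := ((hre.mul hre).add (him.mul him))
  convert this using 1
  · rfl
  · rfl
  · funext s; simp [Complex.normSq_apply]
  simp only [Function.comp, reCLM_apply, imCLM_apply, Complex.mul_re, Complex.conj_re,
    Complex.conj_im]
  ring

private lemma re_div_half {W : ℂ} (hnsq' : W.re * W.re + W.im * W.im = 1)
    (h1Wre : (1:ℝ) + W.re ≠ 0) : (W / (1 + W)).re = 1/2 := by
  have hns : Complex.normSq (1 + W) = 2 * (1 + W.re) := by
    rw [Complex.normSq_apply]
    simp only [Complex.add_re, Complex.add_im, Complex.one_re, Complex.one_im]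
    nlinarith
  rw [Complex.div_re, hns]
  simp only [Complex.add_re, Complex.add_im, Complex.one_re, Complex.one_im]
  rw [← add_div, div_eq_iff (mul_ne_zero two_ne_zero h1Wre)]
  nlinarith [hnsq']

set_option maxHeartbeats 1000000 in
theorem class_C_criterion (f : ℂ → ℂ)
    (hf : DifferentiableOn ℂ f (ball (0:ℂ) 1))
    (hf0 : f 0 = 0) (hf'0 : deriv f 0 = 1)
    (β γ δ : ℝ) (hβ : 0 ≤ β) (hγ : 0 ≤ γ) (hδ : -(1/2) < δ)
    (hne : ∀ z ∈ ball (0:ℂ) 1, deriv f z ≠ 0)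
    (hineq : ∀ z ∈ ball (0:ℂ) 1,
      ‖deriv f z - 1‖ ^ β * ‖(δ : ℂ) + z * deriv (deriv f) z / deriv f z‖ ^ γ
        < ((1 + 2*δ)/2) ^ γ) :
    ∀ z ∈ ball (0:ℂ) 1, ‖deriv f z - 1‖ < 1 := by
  intro z₀ hz₀
  by_contra hcon
  push_neg at hcon
  set w : ℂ → ℂ := fun z => deriv f z - 1 with hw
  have hz₀n : ‖z₀‖ < 1 := mem_ball_zero_iff.mp hz₀
  have hfa : AnalyticOnNhd ℂ (deriv f) (ball (0:ℂ) 1) :=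
    (hf.analyticOnNhd isOpen_ball).deriv
  have hwd : ∀ ζ ∈ ball (0:ℂ) 1, DifferentiableAt ℂ w ζ := fun ζ hζ =>
    ((hfa ζ hζ).differentiableAt).sub_const 1
  have hw0 : w 0 = 0 := by simp [hw, hf'0]
  have hwderiv : ∀ ζ : ℂ, deriv w ζ = deriv (deriv f) ζ := fun ζ => by
    simp only [hw]
    exact deriv_sub_const 1
  have hsub : closedBall (0:ℂ) ‖z₀‖ ⊆ ball (0:ℂ) 1 := closedBall_subset_ball hz₀n
  have hwc : ContinuousOn w (closedBall (0:ℂ) ‖z₀‖) := fun ζ hζ =>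
    ((hwd ζ (hsub hζ)).continuousAt).continuousWithinAt
  -- the compact set where ‖w‖ ≥ 1
  set K : Set ℂ := closedBall (0:ℂ) ‖z₀‖ ∩ (fun z => ‖w z‖) ⁻¹' (Set.Ici 1) with hK
  have hKclosed : IsClosed K :=
    ContinuousOn.preimage_isClosed_of_isClosed hwc.norm isClosed_closedBall isClosed_Ici
  have hKcompact : IsCompact K :=
    (isCompact_closedBall (0:ℂ) ‖z₀‖).of_isClosed_subset hKclosed Set.inter_subset_left
  have hKne : z₀ ∈ K := ⟨mem_closedBall_zero_iff.mpr le_rfl, hcon⟩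
  obtain ⟨z₁, hz₁K, hz₁min⟩ :=
    hKcompact.exists_isMinOn ⟨z₀, hKne⟩ continuous_norm.continuousOn
  have hz₁le : ‖z₁‖ ≤ ‖z₀‖ := mem_closedBall_zero_iff.mp hz₁K.1
  have h1lew : 1 ≤ ‖w z₁‖ := hz₁K.2
  have hz₁mem : z₁ ∈ ball (0:ℂ) 1 := mem_ball_zero_iff.mpr (lt_of_le_of_lt hz₁le hz₀n)
  have hr₀pos : 0 < ‖z₁‖ := by
    rcases eq_or_lt_of_le (norm_nonneg z₁) with h | h
    · exfalso
      have : z₁ = 0 := by simpa using h.symm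
      rw [this, hw0] at h1lew
      norm_num at h1lew
    · exact h
  -- strict bound inside the minimal radius
  have hlt : ∀ z : ℂ, ‖z‖ < ‖z₁‖ → ‖w z‖ < 1 := by
    intro z hz
    by_contra hge
    push_neg at hge
    have hzK : z ∈ K :=
      ⟨mem_closedBall_zero_iff.mpr (le_trans hz.le hz₁le), hge⟩
    exact absurd (hz₁min hzK) (not_le.mpr hz)
  -- weak bound on the closed ball of radius ‖z₁‖
  have hle : ∀ z : ℂ, ‖z‖ ≤ ‖z₁‖ → ‖w z‖ ≤ 1 := by
    intro z hz
    rcases lt_or_eq_of_le hz with h | h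
    · exact (hlt z h).le
    · have hzmem : z ∈ ball (0:ℂ) 1 := mem_ball_zero_iff.mpr (lt_of_le_of_lt hz (lt_of_le_of_lt hz₁le hz₀n))
      have hc : ContinuousAt w z := (hwd z hzmem).continuousAt
      have h1 : Filter.Tendsto (fun t : ℝ => (t:ℂ) * z) (nhdsWithin 1 (Set.Iio 1)) (nhds z) := by
        have hc2 : Continuous (fun t : ℝ => (t:ℂ) * z) :=
          Complex.continuous_ofReal.mul continuous_const
        have := hc2.tendsto (1:ℝ)
        simp only [Complex.ofReal_one, one_mul] at this
        exact this.mono_left nhdsWithin_le_nhds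
      have htend : Filter.Tendsto (fun t : ℝ => ‖w ((t:ℂ) * z)‖)
          (nhdsWithin 1 (Set.Iio 1)) (nhds ‖w z‖) := (hc.tendsto.comp h1).norm
      refine le_of_tendsto htend ?_
      have hIoo : Set.Ioo (0:ℝ) 1 ∈ nhdsWithin (1:ℝ) (Set.Iio 1) :=
        Ioo_mem_nhdsLT_of_mem (by constructor <;> norm_num)
      filter_upwards [hIoo] with t ht
      have : ‖(t:ℂ) * z‖ < ‖z₁‖ := by
        rw [norm_mul, Complex.norm_real, Real.norm_eq_abs, abs_of_pos ht.1, ← h]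
        calc t * ‖z‖ < 1 * ‖z‖ := by
              apply mul_lt_mul_of_pos_right ht.2
              rw [h]; exact hr₀pos
          _ = ‖z‖ := one_mul _
      exact (hlt _ this).le
  have hwz₁ : ‖w z₁‖ = 1 := le_antisymm (hle z₁ le_rfl) h1lew
  -- the Jack's-lemma function g
  set g : ℂ → ℂ := fun ζ => w (z₁ * ζ) with hg
  have hmem' : ∀ ζ : ℂ, ‖ζ‖ ≤ 1 → z₁ * ζ ∈ ball (0:ℂ) 1 := by
    intro ζ hζ
    rw [mem_ball_zero_iff, norm_mul]
    calc ‖z₁‖ * ‖ζ‖ ≤ ‖z₁‖ * 1 := mul_le_mul_of_nonneg_left hζ (norm_nonneg _)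
      _ = ‖z₁‖ := mul_one _
      _ < 1 := lt_of_le_of_lt hz₁le hz₀n
  have hgderiv : ∀ ζ : ℂ, ‖ζ‖ ≤ 1 → HasDerivAt g (deriv w (z₁ * ζ) * z₁) ζ := by
    intro ζ hζ
    have hw' : HasDerivAt w (deriv w (z₁ * ζ)) (z₁ * ζ) := (hwd _ (hmem' ζ hζ)).hasDerivAt
    have hlin : HasDerivAt (fun ζ : ℂ => z₁ * ζ) z₁ ζ := by
      simpa using (hasDerivAt_id ζ).const_mul z₁
    exact hw'.comp ζ hlin
  have hgdiff : DifferentiableOn ℂ g (ball (0:ℂ) 1) := by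
    intro ζ hζ
    exact (hgderiv ζ (mem_ball_zero_iff.mp hζ).le).differentiableAt.differentiableWithinAt
  have hgmaps : Set.MapsTo g (ball (0:ℂ) 1) (ball (0:ℂ) 1) := by
    intro ζ hζ
    rw [mem_ball_zero_iff] at hζ ⊢
    apply hlt
    rw [norm_mul]
    calc ‖z₁‖ * ‖ζ‖ < ‖z₁‖ * 1 := mul_lt_mul_of_pos_left hζ hr₀pos
      _ = ‖z₁‖ := mul_one _
  have hg0 : g 0 = 0 := by simp [hg, hw0]
  have hg1 : g 1 = w z₁ := by simp [hg]
  -- Schwarz lemma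
  have hschwarz : ∀ t : ℝ, 0 ≤ t → t < 1 → ‖g (t:ℂ)‖ ≤ t := by
    intro t ht0 ht1
    have := Complex.norm_le_norm_of_mapsTo_ball hgdiff (hgmaps.mono_right ball_subset_closedBall) hg0
      (z := (t:ℂ)) (by rw [Complex.norm_real, Real.norm_eq_abs, _root_.abs_of_nonneg ht0]; exact ht1)
    rw [Complex.norm_real, Real.norm_eq_abs, _root_.abs_of_nonneg ht0] at this
    exact this
  -- the derivative of g at 1
  set B : ℂ := deriv w z₁ * z₁ with hB
  have hgB : HasDerivAt g B 1 := by
    have := hgderiv 1 (by norm_num)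
    simpa using this
  -- radial derivative inequality
  have hrad : HasDerivAt (fun t : ℝ => Complex.normSq (g (t:ℂ)))
      (2 * ((starRingEnd ℂ) (g 1) * B).re) 1 := by
    have := normSq_hasDerivAt' (G := fun t : ℝ => g (t:ℂ)) (hgB.comp_ofReal)
    simpa using this
  have hnormSq1 : Complex.normSq (g 1) = 1 := by
    rw [Complex.normSq_eq_norm_sq, hg1, hwz₁]; norm_num
  have hReA : 1 ≤ ((starRingEnd ℂ) (g 1) * B).re := by
    have hslope := hasDerivAt_iff_tendsto_slope.mp hrad
    have hslope' := hslope.mono_left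
      (nhdsWithin_mono 1 (fun x hx => (Set.mem_Iio.mp hx).ne : Set.Iio (1:ℝ) ⊆ {(1:ℝ)}ᶜ))
    have htend2 : Filter.Tendsto (fun t : ℝ => t + 1) (nhdsWithin 1 (Set.Iio 1)) (nhds 2) := by
      have hc2 : Continuous (fun t : ℝ => t + 1) := continuous_id.add continuous_const
      have := hc2.tendsto (1:ℝ)
      norm_num at this
      exact this.mono_left nhdsWithin_le_nhds
    have hev : ∀ᶠ t in nhdsWithin (1:ℝ) (Set.Iio 1),
        t + 1 ≤ slope (fun t : ℝ => Complex.normSq (g (t:ℂ))) 1 t := by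
      have hIoo : Set.Ioo (0:ℝ) 1 ∈ nhdsWithin (1:ℝ) (Set.Iio 1) :=
        Ioo_mem_nhdsLT_of_mem (by constructor <;> norm_num)
      filter_upwards [hIoo] with t ht
      have hgt : ‖g (t:ℂ)‖ ≤ t := hschwarz t ht.1.le ht.2
      have hsq : Complex.normSq (g (t:ℂ)) ≤ t ^ 2 := by
        rw [Complex.normSq_eq_norm_sq]
        nlinarith [norm_nonneg (g (t:ℂ))]
      have hcast : Complex.normSq (g ((1:ℝ):ℂ)) = 1 := by
        rw [Complex.ofReal_one, hnormSq1]
      rw [slope_def_field, hcast, le_div_iff_of_neg (sub_neg.mpr ht.2)]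
      nlinarith
    have := le_of_tendsto_of_tendsto htend2 hslope' hev
    linarith
  -- tangential derivative: local max at θ = 0
  have hE : HasDerivAt (fun θ : ℝ => Complex.exp ((θ:ℂ) * Complex.I)) Complex.I 0 := by
    have h1 : HasDerivAt (fun θ : ℝ => (θ:ℂ) * Complex.I) Complex.I 0 := by
      have := (Complex.ofRealCLM.hasDerivAt (x := (0:ℝ))).mul_const Complex.I
      simpa using this
    have := h1.cexp
    simpa using this
  have hgE : HasDerivAt (fun θ : ℝ => g (Complex.exp ((θ:ℂ) * Complex.I)))
      (B * Complex.I) 0 := by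
    have h2 : HasDerivAt g B (Complex.exp (((0:ℝ):ℂ) * Complex.I)) := by
      rw [show (((0:ℝ):ℂ) * Complex.I) = 0 by simp, Complex.exp_zero]
      exact hgB
    exact h2.comp 0 hE
  have hu : HasDerivAt (fun θ : ℝ => Complex.normSq (g (Complex.exp ((θ:ℂ) * Complex.I))))
      (2 * ((starRingEnd ℂ) (g 1) * (B * Complex.I)).re) 0 := by
    have := normSq_hasDerivAt' hgE
    simpa using this
  have hmaxu : IsLocalMax (fun θ : ℝ => Complex.normSq (g (Complex.exp ((θ:ℂ) * Complex.I)))) 0 := by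
    apply Filter.Eventually.of_forall
    intro θ
    simp only
    have hnorm1 : ‖Complex.exp ((θ:ℂ) * Complex.I)‖ = 1 := by
      rw [Complex.norm_exp]
      simp
    have hle1 : ‖g (Complex.exp ((θ:ℂ) * Complex.I))‖ ≤ 1 := by
      apply hle
      rw [norm_mul, hnorm1, mul_one]
    have h0 : Complex.normSq (g (Complex.exp (((0:ℝ):ℂ) * Complex.I))) = 1 := by
      rw [show (((0:ℝ):ℂ) * Complex.I) = 0 by simp, Complex.exp_zero, hnormSq1]
    rw [h0, Complex.normSq_eq_norm_sq]
    nlinarith [norm_nonneg (g (Complex.exp ((θ:ℂ) * Complex.I)))]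
  have hImA : ((starRingEnd ℂ) (g 1) * B).im = 0 := by
    have hd0 := hmaxu.deriv_eq_zero
    rw [hu.deriv] at hd0
    have h3 : ((starRingEnd ℂ) (g 1) * (B * Complex.I)).re = 0 := by linarith
    have h4 : (starRingEnd ℂ) (g 1) * (B * Complex.I)
        = ((starRingEnd ℂ) (g 1) * B) * Complex.I := (mul_assoc _ _ _).symm
    rw [h4, Complex.mul_re, Complex.I_re, Complex.I_im] at h3
    simp only [mul_zero, mul_one, zero_sub, neg_eq_zero] at h3
    exact h3
  -- assemble: B = k * W with k = A.re real, k ≥ 1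
  set W : ℂ := w z₁ with hW
  have hg1W : g 1 = W := hg1
  set A : ℂ := (starRingEnd ℂ) W * B with hA
  have hAre : 1 ≤ A.re := by rw [hA, ← hg1W]; exact hReA
  have hAim : A.im = 0 := by rw [hA, ← hg1W]; exact hImA
  have hnsq : Complex.normSq W = 1 := by
    rw [Complex.normSq_eq_norm_sq, hwz₁]; norm_num
  have hWW : W * (starRingEnd ℂ) W = 1 := by
    rw [Complex.mul_conj, hnsq, Complex.ofReal_one]
  have hAeq : A = ((A.re : ℝ) : ℂ) := Complex.ext (by simp) (by simp [hAim])
  have hBAW : B = ((A.re : ℝ) : ℂ) * W := by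
    have hAWB : A * W = B := by
      rw [hA]
      linear_combination B * hWW
    rw [← hAeq, ← hAWB]
  -- final computation at z₁
  have hfz₁ : deriv f z₁ ≠ 0 := hne z₁ hz₁mem
  have h1W : (1:ℂ) + W = deriv f z₁ := by
    rw [hW]
    show (1:ℂ) + (deriv f z₁ - 1) = deriv f z₁
    ring
  have h1Wne : (1:ℂ) + W ≠ 0 := by rw [h1W]; exact hfz₁
  have hz₁B : z₁ * deriv (deriv f) z₁ = B := by
    rw [hB, ← hwderiv z₁]
    ring
  have hsplit : (δ:ℂ) + z₁ * deriv (deriv f) z₁ / deriv f z₁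
      = (δ:ℂ) + ((A.re : ℝ) : ℂ) * (W / (1 + W)) := by
    rw [hz₁B, hBAW, ← h1W, mul_div_assoc]
  have hnsq' : W.re * W.re + W.im * W.im = 1 := by
    rw [← Complex.normSq_apply]; exact hnsq
  have h1Wre : (1:ℝ) + W.re ≠ 0 := by
    intro h0
    apply h1Wne
    have hWre : W.re = -1 := by linarith
    have hWim : W.im = 0 := by nlinarith
    apply Complex.ext <;> simp [hWre, hWim]
  have hre2 : (W / (1 + W)).re = 1/2 := re_div_half hnsq' h1Wre
  have hQre : ((δ:ℂ) + ((A.re : ℝ) : ℂ) * (W / (1 + W))).re = δ + A.re * (1/2) := by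
    simp [Complex.add_re, Complex.mul_re, hre2]
  have hQnorm : (1 + 2*δ)/2 ≤ ‖(δ:ℂ) + z₁ * deriv (deriv f) z₁ / deriv f z₁‖ := by
    rw [hsplit]
    calc (1 + 2*δ)/2 ≤ ((δ:ℂ) + ((A.re : ℝ) : ℂ) * (W / (1 + W))).re := by
          rw [hQre]; linarith
      _ ≤ ‖_‖ := Complex.re_le_norm _
      _ = ‖_‖ := rfl
  have hx := hineq z₁ hz₁mem
  have hWnorm1 : ‖deriv f z₁ - 1‖ = 1 := hwz₁
  rw [hWnorm1, Real.one_rpow, one_mul] at hx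
  have hmono : ((1 + 2*δ)/2) ^ γ ≤ ‖(δ:ℂ) + z₁ * deriv (deriv f) z₁ / deriv f z₁‖ ^ γ :=
    Real.rpow_le_rpow (by linarith) hQnorm hγ
  linarith
end

section
/- Let f be analytic on the open unit disk 𝔻 with f(0)=0 and f'(0)=1, and let β, γ ≥ 0 be real. If |f'(z) - 1|^β · |z·f''(z)/f'(z)|^γ < (1/2)^γ for all z ∈ 𝔻 (with f'(z) ≠ 0), then |f'(z) - 1| < 1 for all z ∈ 𝔻. -/
open Complex Metric Set Filter Topology

/-- Auxiliary: slope argument at a boundary max point ("Jack's lemma", weak form).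
If `g` is differentiable on the unit ball, `g 0 = 0`, `w ≠ 0` is in the ball,
`‖g‖` on the closed ball of radius `‖w‖` is maximized at `w`, and `1 ≤ ‖g w‖`,
then `‖g w‖ ≤ ‖w * deriv g w‖`. -/
theorem jack_aux (g : ℂ → ℂ) (hg : DifferentiableOn ℂ g (ball (0:ℂ) 1))
    (hg0 : g 0 = 0) (w : ℂ) (hw : w ∈ ball (0:ℂ) 1) (hw0 : w ≠ 0)
    (hmax : ∀ z ∈ closedBall (0:ℂ) ‖w‖, ‖g z‖ ≤ ‖g w‖) (hM : 1 ≤ ‖g w‖) :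
    ‖g w‖ ≤ ‖w * deriv g w‖ := by
  set r : ℝ := ‖w‖ with hr
  have hr0 : 0 < r := norm_pos_iff.mpr hw0
  have hr1 : r < 1 := by simpa [mem_ball, dist_eq_norm] using hw
  have hgw : g w ≠ 0 := by intro h; rw [h, norm_zero] at hM; linarith
  set F : ℂ → ℂ := fun z => g (w * z) / g w with hF
  -- F is differentiable on ball 0 (1/r)
  have hmem : ∀ z : ℂ, z ∈ ball (0:ℂ) (1/r) → w * z ∈ ball (0:ℂ) 1 := by
    intro z hz
    simp only [mem_ball, dist_zero_right] at hz ⊢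
    calc ‖w * z‖ = r * ‖z‖ := by rw [norm_mul]
    _ < r * (1/r) := by exact mul_lt_mul_of_pos_left hz hr0
    _ = 1 := by field_simp
  have hFd : DifferentiableOn ℂ F (ball (0:ℂ) (1/r)) := by
    apply DifferentiableOn.div_const
    exact hg.comp ((differentiable_id.const_mul w).differentiableOn) hmem
  have hF0 : F 0 = 0 := by simp [hF, hg0]
  have hF1 : F 1 = 1 := by simp [hF, div_self hgw]
  -- bound: ‖F z‖ ≤ 1 on ball 0 1
  have hFle : ∀ z ∈ ball (0:ℂ) 1, ‖F z‖ ≤ 1 := by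
    intro z hz
    simp only [mem_ball, dist_zero_right] at hz
    have h1 : w * z ∈ closedBall (0:ℂ) r := by
      simp only [mem_closedBall, dist_zero_right, norm_mul]
      nlinarith [norm_nonneg z, norm_nonneg w]
    have := hmax _ h1
    rw [hF, norm_div]
    rw [div_le_one (by linarith)]
    exact this
  have hFd1 : DifferentiableOn ℂ F (ball (0:ℂ) 1) :=
    hFd.mono (ball_subset_ball (by rw [le_div_iff₀ hr0]; linarith))
  -- Schwarz: ‖F t‖ ≤ t for t ∈ (0,1)
  have hSch : ∀ t : ℝ, t ∈ Set.Ioo (0:ℝ) 1 → ‖F (t:ℂ)‖ ≤ t := by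
    intro t ht
    by_contra hc
    push_neg at hc
    set s : ℝ := (1 + ‖F (t:ℂ)‖ / t) / 2 with hs
    have hts : 1 < ‖F (t:ℂ)‖ / t := (one_lt_div ht.1).mpr hc
    have hs1 : 1 < s := by rw [hs]; linarith
    have hmaps : MapsTo F (ball (0:ℂ) 1) (ball (F 0) s) := by
      intro z hz
      rw [hF0, mem_ball, dist_zero_right]
      exact lt_of_le_of_lt (hFle z hz) hs1
    have ht1 : (t:ℂ) ∈ ball (0:ℂ) 1 := by
      simp only [mem_ball, dist_zero_right, Complex.norm_real, Real.norm_eq_abs,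
        abs_of_pos ht.1]
      exact ht.2
    have := Complex.dist_le_div_mul_dist_of_mapsTo_ball hFd1 (hmaps.mono_right ball_subset_closedBall) ht1
    rw [hF0, dist_zero_right, dist_zero_right, Complex.norm_real,
      Real.norm_eq_abs, abs_of_pos ht.1] at this
    have hle : ‖F (t:ℂ)‖ ≤ s * t := by simpa using this
    have hst : s * t = (t + ‖F (t:ℂ)‖) / 2 := by
      rw [hs, div_mul_eq_mul_div, add_mul, one_mul, div_mul_cancel₀ _ ht.1.ne']
    rw [hst] at hle
    linarith
  -- derivative of F at 1
  have hgd : HasDerivAt g (deriv g w) w := by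
    have : DifferentiableAt ℂ g w :=
      hg.differentiableAt (isOpen_ball.mem_nhds hw)
    exact this.hasDerivAt
  have hcomp : HasDerivAt (fun z => g (w * z)) (deriv g w * w) 1 := by
    have h2 : HasDerivAt (fun z : ℂ => w * z) w 1 := by
      simpa using (hasDerivAt_id (1:ℂ)).const_mul w
    have := HasDerivAt.comp (1:ℂ) (by rwa [mul_one] : HasDerivAt g (deriv g w) (w * 1)) h2
    exact this
  have hFD : HasDerivAt F (deriv g w * w / g w) 1 := hcomp.div_const _
  -- slope limit from the left gives 1 ≤ Re D
  set D : ℂ := deriv g w * w / g w with hD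
  have hslope : Tendsto (fun t : ℝ => slope F 1 (t:ℂ)) (𝓝[<] (1:ℝ)) (𝓝 D) := by
    have h1 := hasDerivAt_iff_tendsto_slope.mp hFD
    apply h1.comp
    have hc : Tendsto (fun t : ℝ => (t:ℂ)) (𝓝[<] (1:ℝ)) (𝓝 (1:ℂ)) := by
      have := (Complex.continuous_ofReal.tendsto 1).mono_left (nhdsWithin_le_nhds (s := Set.Iio (1:ℝ)))
      simpa using this
    rw [tendsto_nhdsWithin_iff]
    refine ⟨hc, ?_⟩
    filter_upwards [self_mem_nhdsWithin] with t ht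
    simp only [Set.mem_Iio] at ht
    simp only [Set.mem_compl_iff, Set.mem_singleton_iff]
    intro h
    have : t = 1 := by exact_mod_cast h
    linarith
  have hre : 1 ≤ D.re := by
    have hten : Tendsto (fun t : ℝ => (slope F 1 (t:ℂ)).re) (𝓝[<] (1:ℝ)) (𝓝 D.re) :=
      (Complex.continuous_re.tendsto D).comp hslope
    refine ge_of_tendsto hten ?_
    filter_upwards [Ioo_mem_nhdsLT_of_mem (by norm_num : (1:ℝ) ∈ Set.Ioc 0 1)] with t ht
    have ht1 : t < 1 := ht.2
    have ht0 : 0 < t := ht.1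
    have hFt := hSch t ht
    have hne : (t:ℂ) - 1 ≠ 0 := by
      intro h
      have : (t:ℂ) = 1 := by linear_combination h
      have : t = 1 := by exact_mod_cast this
      linarith
    have hcast : ((t:ℂ) - 1) = ((t - 1 : ℝ) : ℂ) := by push_cast; ring
    rw [slope_def_field, hF1]
    have : (F (t:ℂ) - 1) / ((t:ℂ) - 1) = (1 - F (t:ℂ)) / ((1 - t : ℝ) : ℂ) := by
      rw [hcast]
      rw [div_eq_div_iff (by rwa [← hcast]) (by
        simp only [ne_eq, Complex.ofReal_eq_zero]; intro h; linarith)]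
      push_cast; ring
    rw [this, Complex.div_ofReal_re]
    have h1t : 0 < 1 - t := by linarith
    rw [le_div_iff₀ h1t]
    have : 1 - (F (t:ℂ)).re ≥ 1 - ‖F (t:ℂ)‖ := by
      have := Complex.re_le_norm (F (t:ℂ))
      linarith
    simp only [Complex.sub_re, Complex.one_re]
    nlinarith
  -- conclude
  have hDnorm : 1 ≤ ‖D‖ := le_trans hre (by
    have := Complex.re_le_norm D
    exact this)
  rw [hD, norm_div] at hDnorm
  rw [one_le_div (by linarith : (0:ℝ) < ‖g w‖)] at hDnorm
  calc ‖g w‖ ≤ ‖deriv g w * w‖ := hDnorm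
  _ = ‖w * deriv g w‖ := by rw [mul_comm]

theorem class_C_criterion_delta_zero (f : ℂ → ℂ)
    (hf : DifferentiableOn ℂ f (ball (0:ℂ) 1))
    (hf0 : f 0 = 0) (hf'0 : deriv f 0 = 1)
    (β γ : ℝ) (hβ : 0 ≤ β) (hγ : 0 ≤ γ)
    (hne : ∀ z ∈ ball (0:ℂ) 1, deriv f z ≠ 0)
    (hineq : ∀ z ∈ ball (0:ℂ) 1,
      ‖deriv f z - 1‖ ^ β * ‖z * deriv (deriv f) z / deriv f z‖ ^ γ
        < (1/2 : ℝ) ^ γ) :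
    ∀ z ∈ ball (0:ℂ) 1, ‖deriv f z - 1‖ < 1 := by
  by_contra hcon
  push_neg at hcon
  obtain ⟨z0, hz0, hz0ge⟩ := hcon
  set g : ℂ → ℂ := fun z => deriv f z - 1 with hgdef
  have hfan : AnalyticOnNhd ℂ f (ball (0:ℂ) 1) := hf.analyticOnNhd isOpen_ball
  have hg : DifferentiableOn ℂ g (ball (0:ℂ) 1) :=
    (hfan.deriv.differentiableOn).sub_const 1
  have hg0 : g 0 = 0 := by simp [hgdef, hf'0]
  have hderivg : ∀ z, deriv g z = deriv (deriv f) z := by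
    intro z
    simp [hgdef, deriv_sub_const]
  -- min radius point
  have hz0' : ‖z0‖ < 1 := mem_ball_zero_iff.mp hz0
  set K : Set ℂ := closedBall 0 ‖z0‖ with hK
  have hKs : K ⊆ ball (0:ℂ) 1 := closedBall_subset_ball hz0'
  have hKc : IsCompact K := isCompact_closedBall _ _
  have hgc : ContinuousOn g K := (hg.continuousOn).mono hKs
  set T : Set ℂ := {z ∈ K | 1 ≤ ‖g z‖} with hT
  have hTc : IsCompact T := by
    have h1 : IsClosed T := by
      have := hgc.norm
      have h2 : T = K ∩ (fun z => ‖g z‖) ⁻¹' (Set.Ici 1) := by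
        ext z; simp [hT, Set.mem_sep_iff]
      rw [h2]
      exact ContinuousOn.preimage_isClosed_of_isClosed this isClosed_closedBall isClosed_Ici
    exact hKc.of_isClosed_subset h1 (fun z hz => hz.1)
  have hTne : T.Nonempty := ⟨z0, ⟨mem_closedBall_zero_iff.mpr le_rfl, hz0ge⟩⟩
  obtain ⟨w0, hw0T, hw0min⟩ := hTc.exists_isMinOn hTne (continuous_norm.continuousOn)
  set r : ℝ := ‖w0‖ with hrdef
  have hr1 : r < 1 := lt_of_le_of_lt (mem_closedBall_zero_iff.mp hw0T.1) hz0'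
  have hr0 : 0 < r := by
    rcases eq_or_lt_of_le (norm_nonneg w0) with h | h
    · exfalso
      have hw00 : w0 = 0 := by rwa [eq_comm, norm_eq_zero] at h
      have h2 := hw0T.2
      rw [hw00, hg0, norm_zero] at h2
      linarith
    · exact h
  have hlt : ∀ z : ℂ, ‖z‖ < r → ‖g z‖ < 1 := by
    intro z hz
    by_contra hc
    push_neg at hc
    have hzK : z ∈ K := by
      rw [hK, mem_closedBall_zero_iff]
      calc ‖z‖ ≤ r := hz.le
      _ ≤ ‖z0‖ := mem_closedBall_zero_iff.mp hw0T.1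
    have : w0 ∈ T → r ≤ ‖z‖ := fun _ => hw0min ⟨hzK, hc⟩
    exact absurd (this hw0T) (not_le.mpr hz)
  -- max point on closedBall 0 r
  have hrK : closedBall (0:ℂ) r ⊆ ball (0:ℂ) 1 := closedBall_subset_ball hr1
  obtain ⟨w, hwB, hwmax⟩ := (isCompact_closedBall (0:ℂ) r).exists_isMaxOn
    (nonempty_closedBall.mpr hr0.le) ((hg.continuousOn.mono hrK).norm)
  have hw0B : w0 ∈ closedBall (0:ℂ) r := mem_closedBall_zero_iff.mpr (le_of_eq rfl)
  have hM : 1 ≤ ‖g w‖ := le_trans hw0T.2 (hwmax hw0B)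
  have hwr : ‖w‖ = r := by
    rcases eq_or_lt_of_le (mem_closedBall_zero_iff.mp hwB) with h | h
    · exact h
    · exact absurd (hlt w h) (not_lt.mpr hM)
  have hwball : w ∈ ball (0:ℂ) 1 := mem_ball_zero_iff.mpr (hwr ▸ hr1)
  have hwne : w ≠ 0 := by
    intro h; rw [h, hg0, norm_zero] at hM; linarith
  -- apply jack_aux
  have hjack : ‖g w‖ ≤ ‖w * deriv g w‖ := by
    apply jack_aux g hg hg0 w hwball hwne _ hM
    intro z hz
    rw [hwr] at hz
    exact hwmax hz
  -- final contradiction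
  have hfw := hne w hwball
  have hfweq : deriv f w = g w + 1 := by simp [hgdef]
  have hfwle : ‖deriv f w‖ ≤ 2 * ‖g w‖ := by
    rw [hfweq]
    calc ‖g w + 1‖ ≤ ‖g w‖ + 1 := by simpa using norm_add_le (g w) 1
    _ ≤ 2 * ‖g w‖ := by linarith
  have hterm : (1/2 : ℝ) ≤ ‖w * deriv (deriv f) w / deriv f w‖ := by
    rw [norm_div, ← hderivg]
    rw [le_div_iff₀ (norm_pos_iff.mpr hfw)]
    calc (1/2 : ℝ) * ‖deriv f w‖ ≤ (1/2) * (2 * ‖g w‖) := by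
          apply mul_le_mul_of_nonneg_left hfwle; norm_num
    _ = ‖g w‖ := by ring
    _ ≤ ‖w * deriv g w‖ := hjack
  have h1 : (1:ℝ) ≤ ‖deriv f w - 1‖ ^ β := by
    have : ‖deriv f w - 1‖ = ‖g w‖ := by simp [hgdef]
    rw [this]
    exact Real.one_le_rpow hM hβ
  have h2 : ((1/2 : ℝ)) ^ γ ≤ ‖w * deriv (deriv f) w / deriv f w‖ ^ γ :=
    Real.rpow_le_rpow (by norm_num) hterm hγ
  have := hineq w hwball
  nlinarith [Real.rpow_nonneg (norm_nonneg (w * deriv (deriv f) w / deriv f w)) γ,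
    Real.rpow_nonneg (by norm_num : (0:ℝ) ≤ 1/2) γ]
end

section
/- Let f be analytic on the open unit disk 𝔻 with f(0)=0, f'(0)=1, and f(z) ≠ 0 for z ≠ 0. Suppose there exist real numbers β, γ with β + 2γ ≥ 0 such that for all z ∈ 𝔻, |z·f'(z)/f(z) + 1|^β · |z·(d/dz)(z·f'(z)/f(z))|^γ < (1/2)^γ. Then Re(z·f'(z)/f(z)) > 0 for all z ∈ 𝔻. -/
open Complex Metric Filter Set
open scoped Topology RealInnerProductSpace

/-- Jack's-lemma-type bound. -/
lemma jack_bound (G : ℂ → ℂ) (hG : DifferentiableOn ℂ G (ball (0:ℂ) 1))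
    (hG0 : G 0 = 1) (z0 : ℂ) (hz0b : z0 ∈ ball (0:ℂ) 1)
    (hre0 : (G z0).re = 0) (hpos : ∀ z : ℂ, ‖z‖ < ‖z0‖ → 0 < (G z).re) :
    ‖1 + G z0‖^2 / 2 ≤ ‖z0 * deriv G z0‖ := by
  set r : ℝ := ‖z0‖ with hrdef
  have hr0 : 0 < r := by
    rcases eq_or_ne z0 0 with h | h
    · exfalso; rw [h, hG0] at hre0; simp at hre0
    · exact norm_pos_iff.2 h
  have hr1 : r < 1 := mem_ball_zero_iff.1 hz0b
  have hball_sub : ball (0:ℂ) r ⊆ ball (0:ℂ) 1 := ball_subset_ball hr1.le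
  have hden0 : (1 + G z0) ≠ 0 := by
    intro h
    have := congrArg Complex.re h
    simp [hre0] at this
  set w : ℂ → ℂ := fun z => (1 - G z) / (1 + G z) with hwdef
  have hden : ∀ z ∈ ball (0:ℂ) r, 1 + G z ≠ 0 := by
    intro z hz h
    have hx := hpos z (mem_ball_zero_iff.1 hz)
    have := congrArg Complex.re h
    simp at this
    linarith
  have hwlt : ∀ z ∈ ball (0:ℂ) r, ‖w z‖ < 1 := by
    intro z hz
    have hx := hpos z (mem_ball_zero_iff.1 hz)
    have h2 : normSq (1 - G z) < normSq (1 + G z) := by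
      simp only [Complex.normSq_apply, Complex.add_re, Complex.add_im, Complex.sub_re,
        Complex.sub_im, Complex.one_re, Complex.one_im]
      nlinarith
    have key : ‖1 - G z‖ < ‖1 + G z‖ := by
      rw [Complex.norm_def, Complex.norm_def]
      exact Real.sqrt_lt_sqrt (normSq_nonneg _) h2
    have hpos' : (0:ℝ) < ‖1 + G z‖ := lt_of_le_of_lt (norm_nonneg _) key
    rw [hwdef]
    simp only [norm_div]
    exact (div_lt_one hpos').2 key
  have hw0 : w 0 = 0 := by simp [hwdef, hG0]
  have hwd : DifferentiableOn ℂ w (ball (0:ℂ) r) :=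
    DifferentiableOn.div ((differentiableOn_const _).sub (hG.mono hball_sub))
      ((differentiableOn_const _).add (hG.mono hball_sub)) hden
  have hmaps : MapsTo w (ball (0:ℂ) r) (ball (w 0) 1) := by
    intro z hz
    rw [hw0, mem_ball_zero_iff]
    exact hwlt z hz
  have schwarz : ∀ z ∈ ball (0:ℂ) r, ‖w z‖ ≤ 1 / r * ‖z‖ := by
    intro z hz
    have := Complex.dist_le_div_mul_dist_of_mapsTo_ball hwd (hmaps.mono_right ball_subset_closedBall) hz
    simpa [hw0, dist_eq_norm] using this
  -- derivative of w at z0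
  have hGz0 : HasDerivAt G (deriv G z0) z0 :=
    (hG.differentiableAt (isOpen_ball.mem_nhds hz0b)).hasDerivAt
  set w' : ℂ := ((0 - deriv G z0) * (1 + G z0) - (1 - G z0) * (0 + deriv G z0)) / (1 + G z0)^2
    with hw'def
  have hw' : HasDerivAt w w' z0 :=
    (((hasDerivAt_const z0 (1:ℂ)).sub hGz0).div ((hasDerivAt_const z0 (1:ℂ)).add hGz0) hden0)
  have hw'val : w' = -2 * deriv G z0 / (1 + G z0)^2 := by
    rw [hw'def]; ring_nf
  -- φ(t) = w(t z0)
  have hmul : HasDerivAt (fun ζ : ℂ => ζ * z0) z0 1 := by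
    simpa using (hasDerivAt_id (1:ℂ)).mul_const z0
  have hw'' : HasDerivAt w w' ((1:ℂ) * z0) := by rwa [one_mul]
  have hW : HasDerivAt (fun ζ : ℂ => w (ζ * z0)) (w' * z0) 1 := by
    have := HasDerivAt.comp (1:ℂ) hw'' hmul
    exact this
  have hW1 : HasDerivAt (fun ζ : ℂ => w (ζ * z0)) (w' * z0) ((1:ℝ) : ℂ) := by
    simpa using hW
  have hφ : HasDerivAt (fun t : ℝ => w ((t:ℂ) * z0)) (w' * z0) 1 := hW1.comp_ofReal
  set φ : ℝ → ℂ := fun t => w ((t:ℂ) * z0) with hφdef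
  have hu : HasDerivAt (fun t : ℝ => ⟪φ t, φ t⟫)
      (⟪φ 1, w' * z0⟫ + ⟪w' * z0, φ 1⟫) 1 := HasDerivAt.inner ℝ hφ hφ
  have hv : HasDerivAt (fun t : ℝ => ⟪φ t, φ t⟫ - t^2)
      ((⟪φ 1, w' * z0⟫ + ⟪w' * z0, φ 1⟫) - 2) 1 := by
    have hp : HasDerivAt (fun t : ℝ => t^2) 2 1 := by
      simpa using hasDerivAt_pow 2 (1:ℝ)
    exact hu.sub hp
  have hφ1 : φ 1 = w z0 := by simp [hφdef]
  have hnsq : normSq (w z0) = 1 := by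
    have hnum : normSq (1 - G z0) = normSq (1 + G z0) := by
      simp only [Complex.normSq_apply, Complex.add_re, Complex.add_im, Complex.sub_re,
        Complex.sub_im, Complex.one_re, Complex.one_im, hre0]
      ring
    rw [hwdef]
    simp only [Complex.normSq_div, hnum]
    exact div_self (by simpa [Complex.normSq_eq_zero] using hden0)
  have hnw : ‖w z0‖ = 1 := by
    have := Complex.sq_norm (w z0)
    rw [hnsq] at this
    nlinarith [norm_nonneg (w z0)]
  have hv1 : ⟪φ 1, φ 1⟫ - (1:ℝ)^2 = 0 := by
    rw [hφ1, real_inner_self_eq_norm_sq, hnw]; norm_num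
  -- v ≤ 0 on (0,1)
  have hvle : ∀ t ∈ Ioo (0:ℝ) 1, ⟪φ t, φ t⟫ - t^2 ≤ 0 := by
    intro t ht
    have hmem : (t:ℂ) * z0 ∈ ball (0:ℂ) r := by
      rw [mem_ball_zero_iff]
      simp only [norm_mul, Complex.norm_real, Real.norm_eq_abs, abs_of_pos ht.1]
      calc t * ‖z0‖ < 1 * ‖z0‖ := by
            exact mul_lt_mul_of_pos_right ht.2 hr0
        _ = r := by rw [one_mul]
    have hb : ‖φ t‖ ≤ t := by
      have := schwarz _ hmem
      rw [hφdef]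
      have hnz : ‖(t:ℂ) * z0‖ = t * r := by
        rw [norm_mul, Complex.norm_real, Real.norm_eq_abs, abs_of_pos ht.1]
      calc ‖w ((t:ℂ) * z0)‖ ≤ 1 / r * ‖(t:ℂ) * z0‖ := this
        _ = t := by rw [hnz]; field_simp
    rw [real_inner_self_eq_norm_sq]
    nlinarith [norm_nonneg (φ t)]
  -- derivative nonneg
  have hvpos : 0 ≤ (⟪φ 1, w' * z0⟫ + ⟪w' * z0, φ 1⟫) - 2 := by
    have hslope := hasDerivAt_iff_tendsto_slope.1 hv
    have hmono : 𝓝[Iio (1:ℝ)] 1 ≤ 𝓝[≠] (1:ℝ) :=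
      nhdsWithin_mono 1 (fun x hx => ne_of_lt hx)
    refine ge_of_tendsto (hslope.mono_left hmono) ?_
    · filter_upwards [Ioo_mem_nhdsLT_of_mem (⟨zero_lt_one, le_refl (1:ℝ)⟩ : (1:ℝ) ∈ Ioc (0:ℝ) 1)]
        with t ht
      have hle := hvle t ht
      rw [slope_def_field, hv1, sub_zero]
      exact div_nonneg_of_nonpos hle (by linarith [ht.2])
  have hinner : 1 ≤ ⟪w z0, w' * z0⟫ := by
    rw [hφ1] at hvpos
    have hcomm : ⟪w' * z0, w z0⟫ = ⟪w z0, w' * z0⟫ := real_inner_comm _ _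
    rw [hcomm] at hvpos
    linarith
  have hnormge : 1 ≤ ‖w' * z0‖ := by
    have := real_inner_le_norm (w z0) (w' * z0)
    rw [hnw, one_mul] at this
    linarith
  -- translate to G
  have hkey : ‖w' * z0‖ = 2 * ‖z0 * deriv G z0‖ / ‖1 + G z0‖^2 := by
    rw [hw'val]
    simp only [norm_mul, norm_div, norm_neg, norm_pow]
    rw [show ‖(2 : ℂ)‖ = 2 by simp]
    ring
  rw [hkey] at hnormge
  have hden2 : (0:ℝ) < ‖1 + G z0‖^2 := pow_pos (norm_pos_iff.2 hden0) 2
  have h2 := (le_div_iff₀ hden2).1 hnormge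
  linarith

theorem starlike_criterion' (f G : ℂ → ℂ)
    (hf : DifferentiableOn ℂ f (ball (0:ℂ) 1))
    (hf0 : f 0 = 0) (hf'0 : deriv f 0 = 1)
    (hfne : ∀ z ∈ ball (0:ℂ) 1, z ≠ 0 → f z ≠ 0)
    (hG : DifferentiableOn ℂ G (ball (0:ℂ) 1))
    (hG0 : G 0 = 1)
    (hGf : ∀ z ∈ ball (0:ℂ) 1, z ≠ 0 → G z = z * deriv f z / f z)
    (β γ : ℝ) (hβγ : 0 ≤ β + 2*γ)
    (hineq : ∀ z ∈ ball (0:ℂ) 1,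
      ‖G z + 1‖ ^ β * ‖z * deriv G z‖ ^ γ < (1/2 : ℝ) ^ γ) :
    ∀ z ∈ ball (0:ℂ) 1, 0 < (G z).re := by
  clear hf hf0 hf'0 hfne hGf
  have h0mem : (0:ℂ) ∈ ball (0:ℂ) 1 := mem_ball_self one_pos
  have hGanal : AnalyticOnNhd ℂ G (ball (0:ℂ) 1) := hG.analyticOnNhd isOpen_ball
  rcases lt_trichotomy γ 0 with hγ | hγ | hγ
  · -- γ < 0 : either G is constant, or contradiction near 0
    have hβ : 0 < β := by linarith
    rcases (hGanal.deriv 0 h0mem).eventually_eq_zero_or_eventually_ne_zero with hzero | hne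
    · have heq : EqOn (deriv G) 0 (ball (0:ℂ) 1) :=
        (hGanal.deriv).eqOn_zero_of_preconnected_of_eventuallyEq_zero
          (convex_ball (0:ℂ) 1).isPreconnected h0mem hzero
      intro z hz
      have hzeq : G z = G 0 := (convex_ball (0:ℂ) 1).is_const_of_fderivWithin_eq_zero hG
          (fun x hx => by
            have hd : HasDerivAt G 0 x := by
              have := (hG.differentiableAt (isOpen_ball.mem_nhds hx)).hasDerivAt
              rwa [heq hx] at this
            rw [fderivWithin_of_isOpen isOpen_ball hx, hd.hasFDerivAt.fderiv]
            ext
            simp) hz h0mem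
      rw [hzeq, hG0]
      norm_num
    · exfalso
      have hGc : ContinuousAt G 0 := (hG.differentiableAt (isOpen_ball.mem_nhds h0mem)).continuousAt
      have e1 : ∀ᶠ z : ℂ in 𝓝 0, 1 ≤ ‖G z + 1‖ := by
        have hc : ContinuousAt (fun z : ℂ => ‖G z + 1‖) 0 :=
          (hGc.add continuousAt_const).norm
        have hval : ‖G 0 + 1‖ = 2 := by rw [hG0]; norm_num
        refine Filter.Tendsto.eventually_const_le ?_ hc
        simp only
        rw [hval]; norm_num
      have e2 : ∀ᶠ z : ℂ in 𝓝 0, ‖z * deriv G z‖ < 1/2 := by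
        have hdc : ContinuousAt (deriv G) 0 := ((hGanal.deriv) 0 h0mem).continuousAt
        have hc : ContinuousAt (fun z : ℂ => ‖z * deriv G z‖) 0 :=
          (continuousAt_id.mul hdc).norm
        have hval : ‖(0:ℂ) * deriv G 0‖ = 0 := by simp
        refine Filter.Tendsto.eventually_lt_const ?_ hc
        simp only
        rw [hval]; norm_num
      have e3 : ∀ᶠ z : ℂ in 𝓝 0, z ∈ ball (0:ℂ) 1 :=
        isOpen_ball.eventually_mem h0mem
      obtain ⟨z, ⟨⟨h1z, h2z⟩, h3z⟩, h4z, h5z⟩ :=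
        (((((e1.and e2).and e3).filter_mono nhdsWithin_le_nhds).and
          (hne.and (eventually_mem_nhdsWithin))).exists)
      have hzne : z ≠ 0 := h5z
      have hq := hineq z h3z
      have ht0 : 0 < ‖z * deriv G z‖ := norm_pos_iff.2 (mul_ne_zero hzne h4z)
      have h3 : (1/2:ℝ)^γ < ‖z * deriv G z‖^γ := Real.rpow_lt_rpow_of_neg ht0 h2z hγ
      have h1 : (1:ℝ) ≤ ‖G z + 1‖ ^ β := Real.one_le_rpow h1z hβ.le
      have h2 : ‖z * deriv G z‖^γ ≤ ‖G z + 1‖^β * ‖z * deriv G z‖^γ :=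
        le_mul_of_one_le_left (Real.rpow_nonneg (norm_nonneg _) γ) h1
      linarith
  · -- γ = 0 : the hypothesis at 0 is contradictory
    exfalso
    subst hγ
    have hq := hineq 0 h0mem
    rw [hG0] at hq
    simp only [zero_mul, norm_zero, Real.rpow_zero, mul_one] at hq
    have h2 : ‖(1:ℂ) + 1‖ = 2 := by norm_num
    rw [h2] at hq
    have hb : (0:ℝ) ≤ β := by linarith
    have : (1:ℝ) ≤ 2 ^ β := Real.one_le_rpow one_le_two hb
    linarith
  · -- γ > 0 : main case
    intro z1 hz1
    by_contra hcon
    push_neg at hcon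
    -- find a minimal-norm point where Re G ≤ 0
    have hz1n : ‖z1‖ < 1 := mem_ball_zero_iff.1 hz1
    set S : Set ℂ := {z | z ∈ closedBall (0:ℂ) ‖z1‖ ∧ (G z).re ≤ 0} with hSdef
    have hSsub : S ⊆ ball (0:ℂ) 1 := fun z hz =>
      mem_ball_zero_iff.2 (lt_of_le_of_lt (mem_closedBall_zero_iff.1 hz.1) hz1n)
    have hSclosed : IsClosed S := by
      have hcb : closedBall (0:ℂ) ‖z1‖ ⊆ ball (0:ℂ) 1 := fun z hz =>
        mem_ball_zero_iff.2 (lt_of_le_of_lt (mem_closedBall_zero_iff.1 hz) hz1n)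
      have h1 : ContinuousOn (fun z : ℂ => (G z).re) (closedBall (0:ℂ) ‖z1‖) :=
        Complex.continuous_re.comp_continuousOn (hG.continuousOn.mono hcb)
      have h2 := h1.preimage_isClosed_of_isClosed Metric.isClosed_closedBall (isClosed_Iic (a := (0:ℝ)))
      have h3 : S = closedBall (0:ℂ) ‖z1‖ ∩ (fun z : ℂ => (G z).re) ⁻¹' Iic 0 := by
        ext z
        simp [hSdef, Set.mem_setOf_eq]
      rw [h3]
      exact h2
    have hScompact : IsCompact S :=
      (isCompact_closedBall (0:ℂ) ‖z1‖).of_isClosed_subset hSclosed (fun z hz => hz.1)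
    have hz1S : z1 ∈ S := ⟨mem_closedBall_zero_iff.2 le_rfl, hcon⟩
    obtain ⟨z0, hz0S, hz0min⟩ :=
      hScompact.exists_isMinOn ⟨z1, hz1S⟩ (continuous_norm.continuousOn)
    have hz0b : z0 ∈ ball (0:ℂ) 1 := hSsub hz0S
    have hpos : ∀ z : ℂ, ‖z‖ < ‖z0‖ → 0 < (G z).re := by
      intro z hz
      by_contra h
      push_neg at h
      have hzS : z ∈ S := ⟨mem_closedBall_zero_iff.2
        (le_trans hz.le (mem_closedBall_zero_iff.1 hz0S.1)), h⟩
      exact absurd (hz0min hzS) (not_le.2 hz)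
    have hz0ne : z0 ≠ 0 := by
      intro h
      have := hz0S.2
      rw [h, hG0] at this
      norm_num at this
    have hr0 : 0 < ‖z0‖ := norm_pos_iff.2 hz0ne
    -- Re G z0 = 0
    have hre0 : (G z0).re = 0 := by
      refine le_antisymm hz0S.2 ?_
      have hGc : ContinuousAt G z0 :=
        (hG.differentiableAt (isOpen_ball.mem_nhds hz0b)).continuousAt
      have hc : Tendsto (fun t : ℝ => (G ((t:ℂ) * z0)).re) (𝓝[<] 1) (𝓝 ((G z0).re)) := by
        have h1 : Tendsto (fun t : ℝ => (t:ℂ) * z0) (𝓝 1) (𝓝 z0) := by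
          have : Tendsto (fun t : ℝ => (t:ℂ) * z0) (𝓝 1) (𝓝 (((1:ℝ):ℂ) * z0)) :=
            (Complex.continuous_ofReal.tendsto 1).mul tendsto_const_nhds
          simpa using this
        exact ((Complex.continuous_re.tendsto _).comp (hGc.tendsto.comp h1)).mono_left
          nhdsWithin_le_nhds
      refine ge_of_tendsto hc ?_
      filter_upwards [Ioo_mem_nhdsLT_of_mem (⟨zero_lt_one, le_refl (1:ℝ)⟩ : (1:ℝ) ∈ Ioc (0:ℝ) 1)]
        with t ht
      refine (hpos _ ?_).le
      rw [norm_mul, Complex.norm_real, Real.norm_eq_abs, abs_of_pos ht.1]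
      nlinarith [ht.1, ht.2, hr0]
    -- Jack's-lemma bound
    have hjack := jack_bound G hG hG0 z0 hz0b hre0 hpos
    -- final rpow computation
    have hq := hineq z0 hz0b
    set s : ℝ := ‖G z0 + 1‖ with hsdef
    have hcomm : ‖(1:ℂ) + G z0‖ = s := by rw [hsdef, add_comm]
    rw [hcomm] at hjack
    have hs2 : s^2 = 1 + (G z0).im^2 := by
      rw [hsdef, Complex.sq_norm]
      simp only [Complex.normSq_apply, Complex.add_re, Complex.add_im, Complex.one_re,
        Complex.one_im, hre0]
      ring
    have hs1 : 1 ≤ s := by nlinarith [norm_nonneg (G z0 + 1), sq_nonneg ((G z0).im)]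
    have hs0 : (0:ℝ) < s := by linarith
    have hT1 : (s^2/2 : ℝ) ^ γ ≤ ‖z0 * deriv G z0‖ ^ γ :=
      Real.rpow_le_rpow (by positivity) hjack hγ.le
    have hsb : (0:ℝ) < s ^ β := Real.rpow_pos_of_pos hs0 β
    have hchain : s ^ β * (s^2/2 : ℝ) ^ γ < (1/2:ℝ)^γ :=
      lt_of_le_of_lt (by exact mul_le_mul_of_nonneg_left hT1 hsb.le) hq
    have hexpand : s ^ β * (s^2/2 : ℝ) ^ γ = s ^ (β + 2*γ) * (1/2:ℝ)^γ := by
      rw [show (s^2/2 : ℝ) = s^2 * (1/2) by ring,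
        Real.mul_rpow (by positivity) (by norm_num),
        show (s^2 : ℝ) = s ^ ((2:ℕ):ℝ) by rw [Real.rpow_natCast],
        ← Real.rpow_mul hs0.le, ← mul_assoc, ← Real.rpow_add hs0]
      norm_num
    rw [hexpand] at hchain
    have hhalf : (0:ℝ) < (1/2:ℝ)^γ := Real.rpow_pos_of_pos (by norm_num) γ
    have hlt1 : s ^ (β + 2*γ) < 1 := (mul_lt_iff_lt_one_left hhalf).1 hchain
    have hge1 : (1:ℝ) ≤ s ^ (β + 2*γ) := Real.one_le_rpow hs1 hβγ
    linarith
end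

section
/- Let f be analytic on the open unit disk 𝔻 with f(0)=0, f'(0)=1, and f(z) ≠ 0 for z ≠ 0. Let α ≥ 0, β > 0 be real and set μ = β/(α+β) ∈ (0,1]. If for all z ∈ 𝔻, |z·f'(z)/f(z)|^α · |z·(d/dz)(z·f'(z)/f(z))|^β < (μ/2)^β, then there is an analytic branch of (z·f'(z)/f(z))^{1/μ} on 𝔻 (taking value 1 at 0) whose real part is positive throughout 𝔻, i.e. f ∈ 𝒮𝒯𝒮(μ). -/
open Complex Metric

open MeasureTheory intervalIntegral

noncomputable def phiG (G : ℂ → ℂ) : ℂ → ℂ := fun z => deriv G z / G z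

noncomputable def LG (G : ℂ → ℂ) (z : ℂ) : ℂ :=
  ∫ t in (0:ℝ)..1, z * phiG G ((t:ℂ) * z)

lemma LG_zero (G : ℂ → ℂ) : LG G 0 = 0 := by
  simp [LG]

lemma LG_hasDerivAt (G : ℂ → ℂ) (hG : DifferentiableOn ℂ G (ball (0:ℂ) 1))
    (r : ℝ) (hr1 : r ≤ 1) (hne : ∀ z ∈ ball (0:ℂ) r, G z ≠ 0)
    {z : ℂ} (hz : z ∈ ball (0:ℂ) r) :
    HasDerivAt (LG G) (phiG G z) z := by
  set φ := phiG G with hφdef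
  have hBr : ball (0:ℂ) r ⊆ ball 0 1 := ball_subset_ball hr1
  have hGan : AnalyticOnNhd ℂ G (ball (0:ℂ) 1) := hG.analyticOnNhd isOpen_ball
  have hφan : AnalyticOnNhd ℂ φ (ball (0:ℂ) r) :=
    ((hGan.deriv.mono hBr).div (hGan.mono hBr) hne)
  have hφdiff : ∀ w ∈ ball (0:ℂ) r, DifferentiableAt ℂ φ w := fun w hw =>
    (hφan w hw).differentiableAt
  have hφc : ContinuousOn φ (ball (0:ℂ) r) := fun w hw =>
    (hφan w hw).continuousAt.continuousWithinAt
  have hφ'c : ContinuousOn (deriv φ) (ball (0:ℂ) r) := fun w hw =>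
    (hφan.deriv w hw).continuousAt.continuousWithinAt
  have hz' : ‖z‖ < r := mem_ball_zero_iff.mp hz
  have hr0 : 0 < r := lt_of_le_of_lt (norm_nonneg z) hz'
  set ε : ℝ := (r - ‖z‖)/3 with hεdef
  have hε0 : 0 < ε := by have := norm_nonneg z; simp only [hεdef]; linarith
  set ρ : ℝ := ‖z‖ + 2*ε with hρdef
  have hρr : ρ < r := by simp only [hρdef, hεdef]; linarith
  have hρ0 : 0 ≤ ρ := by positivity
  have hsub : closedBall (0:ℂ) ρ ⊆ ball (0:ℂ) r := fun w hw =>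
    mem_ball_zero_iff.mpr (lt_of_le_of_lt (mem_closedBall_zero_iff.mp hw) hρr)
  have hxnorm : ∀ x ∈ ball z ε, ‖x‖ ≤ ‖z‖ + ε := by
    intro x hx
    have h1 : ‖x - z‖ < ε := mem_ball_iff_norm.mp hx
    calc ‖x‖ = ‖z + (x - z)‖ := by ring_nf
    _ ≤ ‖z‖ + ‖x - z‖ := norm_add_le _ _
    _ ≤ ‖z‖ + ε := by linarith
  have hmem : ∀ t ∈ Set.Icc (0:ℝ) 1, ∀ x ∈ ball z ε, (t:ℂ)*x ∈ closedBall (0:ℂ) ρ := by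
    intro t ht x hx
    rw [mem_closedBall_zero_iff, norm_mul, Complex.norm_real, Real.norm_eq_abs,
      _root_.abs_of_nonneg ht.1]
    calc t * ‖x‖ ≤ 1 * (‖z‖ + ε) :=
      mul_le_mul ht.2 (hxnorm x hx) (norm_nonneg x) zero_le_one
    _ ≤ ρ := by simp only [hρdef]; linarith
  obtain ⟨M1, hM1⟩ := (isCompact_closedBall (0:ℂ) ρ).exists_bound_of_continuousOn
    (hφc.mono hsub)
  obtain ⟨M2, hM2⟩ := (isCompact_closedBall (0:ℂ) ρ).exists_bound_of_continuousOn
    (hφ'c.mono hsub)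
  set F' : ℂ → ℝ → ℂ := fun x t => 1 * φ ((t:ℂ)*x) + x * (deriv φ ((t:ℂ)*x) * (t:ℂ)) with hF'def
  have hdiff : ∀ t ∈ Set.Icc (0:ℝ) 1, ∀ x ∈ ball z ε,
      HasDerivAt (fun y => y * φ ((t:ℂ)*y)) (F' x t) x := by
    intro t ht x hx
    have h2 : HasDerivAt (fun y : ℂ => (t:ℂ)*y) (t:ℂ) x := by
      simpa using (hasDerivAt_id x).const_mul (t:ℂ)
    have h1 : HasDerivAt (fun y : ℂ => φ ((t:ℂ)*y)) (deriv φ ((t:ℂ)*x) * (t:ℂ)) x :=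
      ((hφdiff _ (hsub (hmem t ht x hx))).hasDerivAt).comp x h2
    exact (hasDerivAt_id x).mul h1
  have hcontF : ∀ x ∈ ball z ε, ContinuousOn (fun t : ℝ => x * φ ((t:ℂ)*x)) (Set.Icc 0 1) := by
    intro x hx
    have hmaps : Set.MapsTo (fun t : ℝ => (t:ℂ)*x) (Set.Icc 0 1) (ball (0:ℂ) r) :=
      fun t ht => hsub (hmem t ht x hx)
    have hc : Continuous (fun t : ℝ => (t:ℂ)*x) := Complex.continuous_ofReal.mul continuous_const
    exact continuousOn_const.mul (hφc.comp hc.continuousOn hmaps)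
  have hzball : z ∈ ball z ε := mem_ball_self hε0
  have hIoc : Set.uIoc (0:ℝ) 1 = Set.Ioc 0 1 := Set.uIoc_of_le zero_le_one
  have hIocIcc : Set.Ioc (0:ℝ) 1 ⊆ Set.Icc 0 1 := Set.Ioc_subset_Icc_self
  have hmeas : ∀ᶠ x in nhds z, AEStronglyMeasurable (fun t : ℝ => x * φ ((t:ℂ)*x))
      (volume.restrict (Set.uIoc (0:ℝ) 1)) := by
    filter_upwards [ball_mem_nhds z hε0] with x hx
    rw [hIoc]
    exact ((hcontF x hx).mono hIocIcc).aestronglyMeasurable measurableSet_Ioc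
  have hint : IntervalIntegrable (fun t : ℝ => z * φ ((t:ℂ)*z)) volume 0 1 := by
    apply ContinuousOn.intervalIntegrable
    rw [Set.uIcc_of_le zero_le_one]
    exact hcontF z hzball
  have hcontF' : ContinuousOn (F' z) (Set.Icc 0 1) := by
    have hmaps : Set.MapsTo (fun t : ℝ => (t:ℂ)*z) (Set.Icc 0 1) (ball (0:ℂ) r) :=
      fun t ht => hsub (hmem t ht z hzball)
    have hc : Continuous (fun t : ℝ => (t:ℂ)*z) := Complex.continuous_ofReal.mul continuous_const
    exact (continuousOn_const.mul (hφc.comp hc.continuousOn hmaps)).add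
      (continuousOn_const.mul ((hφ'c.comp hc.continuousOn hmaps).mul
        Complex.continuous_ofReal.continuousOn))
  have hmeas' : AEStronglyMeasurable (F' z) (volume.restrict (Set.uIoc (0:ℝ) 1)) := by
    rw [hIoc]
    exact (hcontF'.mono hIocIcc).aestronglyMeasurable measurableSet_Ioc
  have hbd : ∀ᵐ t ∂(volume : Measure ℝ), t ∈ Set.uIoc (0:ℝ) 1 → ∀ x ∈ ball z ε,
      ‖F' x t‖ ≤ |M1| + r * |M2| := by
    refine Filter.Eventually.of_forall ?_
    intro t ht x hx
    rw [hIoc] at ht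
    have ht' : t ∈ Set.Icc (0:ℝ) 1 := hIocIcc ht
    have htx := hmem t ht' x hx
    have e1 : ‖φ ((t:ℂ)*x)‖ ≤ |M1| := (hM1 _ htx).trans (le_abs_self _)
    have e2 : ‖deriv φ ((t:ℂ)*x)‖ ≤ |M2| := (hM2 _ htx).trans (le_abs_self _)
    have hρr' : ‖z‖ + 2*ε < r := by simpa [hρdef] using hρr
    have e3 : ‖x‖ ≤ r := le_of_lt (lt_of_le_of_lt (hxnorm x hx) (by linarith [hε0]))
    have e4 : |t| ≤ 1 := by rw [_root_.abs_of_nonneg ht'.1]; exact ht'.2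
    have hr0 : (0:ℝ) ≤ r := le_trans (norm_nonneg x) e3
    calc ‖F' x t‖ ≤ ‖1 * φ ((t:ℂ)*x)‖ + ‖x * (deriv φ ((t:ℂ)*x) * (t:ℂ))‖ := norm_add_le _ _
    _ = ‖φ ((t:ℂ)*x)‖ + ‖x‖ * (‖deriv φ ((t:ℂ)*x)‖ * |t|) := by
        rw [one_mul, norm_mul, norm_mul, Complex.norm_real, Real.norm_eq_abs]
    _ ≤ |M1| + r * (|M2| * 1) := add_le_add e1 (mul_le_mul e3
        (mul_le_mul e2 e4 (abs_nonneg t) (abs_nonneg M2)) (by positivity) hr0)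
    _ = |M1| + r * |M2| := by ring
  have hbint : IntervalIntegrable (fun _ : ℝ => |M1| + r * |M2|) volume 0 1 :=
    intervalIntegrable_const
  have hdiff' : ∀ᵐ t ∂(volume : Measure ℝ), t ∈ Set.uIoc (0:ℝ) 1 → ∀ x ∈ ball z ε,
      HasDerivAt (fun y => y * φ ((t:ℂ)*y)) (F' x t) x := by
    refine Filter.Eventually.of_forall ?_
    intro t ht x hx
    rw [hIoc] at ht
    exact hdiff t (hIocIcc ht) x hx
  have hkey := intervalIntegral.hasDerivAt_integral_of_dominated_loc_of_deriv_le (ball_mem_nhds z hε0)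
    hmeas hint hmeas' hbd hbint hdiff'
  have hFTC : ∀ t ∈ Set.uIcc (0:ℝ) 1,
      HasDerivAt (fun s : ℝ => (s:ℂ) * φ ((s:ℂ)*z)) (F' z t) t := by
    intro t ht
    have hti : t ∈ Set.Icc (0:ℝ) 1 := by rwa [Set.uIcc_of_le zero_le_one] at ht
    have h2 : HasDerivAt (fun w : ℂ => w * z) z (t:ℂ) := by
      simpa using (hasDerivAt_id (t:ℂ)).mul_const z
    have h1 : HasDerivAt (fun w : ℂ => φ (w*z)) (deriv φ ((t:ℂ)*z) * z) (t:ℂ) :=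
      by have h := ((hφdiff _ (hsub (hmem t hti z hzball))).hasDerivAt).comp (t:ℂ) h2; exact h
    have h3 : HasDerivAt (fun w : ℂ => w * φ (w*z))
        (1 * φ ((t:ℂ)*z) + (t:ℂ) * (deriv φ ((t:ℂ)*z) * z)) (t:ℂ) :=
      (hasDerivAt_id (t:ℂ)).mul h1
    have h4 := h3.comp_ofReal
    convert h4 using 1
    simp only [hF'def]
    ring
  have hval : (∫ t in (0:ℝ)..1, F' z t) = φ z := by
    rw [intervalIntegral.integral_eq_sub_of_hasDerivAt hFTC hkey.1]
    simp
  have h2 := hkey.2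
  rw [hval] at h2
  exact h2

lemma key (G : ℂ → ℂ) (hG : DifferentiableOn ℂ G (ball (0:ℂ) 1)) (hG0 : G 0 = 1)
    (μ : ℝ) (hμ0 : 0 < μ) (hμ1 : μ ≤ 1)
    (hsm : ∀ z ∈ ball (0:ℂ) 1, ‖G z‖ ^ ((1-μ)/μ) * ‖z * deriv G z‖ < μ/2)
    (r : ℝ) (hr0 : 0 < r) (hr1 : r ≤ 1) (hne : ∀ z ∈ ball (0:ℂ) r, G z ≠ 0) :
    ∀ z ∈ ball (0:ℂ) r,
      Complex.exp (LG G z) = G z ∧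
      ‖Complex.exp (LG G z / (μ:ℝ)) - 1‖ ≤ ‖z‖/(2*r) ∧
      ‖LG G z / (μ:ℝ)‖ ≤ ‖z‖/r ∧
      (1/4 : ℝ) ≤ ‖G z‖ := by
  set φ := phiG G with hφdef
  set L := LG G with hLdef
  have hBr : ball (0:ℂ) r ⊆ ball 0 1 := ball_subset_ball hr1
  have h0mem : (0:ℂ) ∈ ball (0:ℂ) r := mem_ball_self hr0
  have hGan : AnalyticOnNhd ℂ G (ball (0:ℂ) 1) := hG.analyticOnNhd isOpen_ball
  have hφan : AnalyticOnNhd ℂ φ (ball (0:ℂ) r) :=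
    ((hGan.deriv.mono hBr).div (hGan.mono hBr) hne)
  have hφdiff : ∀ w ∈ ball (0:ℂ) r, DifferentiableAt ℂ φ w := fun w hw =>
    (hφan w hw).differentiableAt
  have hLd : ∀ w ∈ ball (0:ℂ) r, HasDerivAt L (φ w) w := fun w hw =>
    LG_hasDerivAt G hG r hr1 hne hw
  have hμC : ((μ:ℝ):ℂ) ≠ 0 := by
    simpa using ne_of_gt hμ0
  -- exp L = G
  have hexp : ∀ z ∈ ball (0:ℂ) r, Complex.exp (L z) = G z := by
    have hq : ∀ w ∈ ball (0:ℂ) r,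
        HasDerivWithinAt (fun w => Complex.exp (-L w) * G w) 0 (ball (0:ℂ) r) w := by
      intro w hw
      have hGd : HasDerivAt G (deriv G w) w :=
        (hG.differentiableAt (isOpen_ball.mem_nhds (hBr hw))).hasDerivAt
      have h1 : HasDerivAt (fun w => Complex.exp (-L w))
          (Complex.exp (-L w) * (-φ w)) w := ((hLd w hw).neg).cexp
      have h2 := h1.mul hGd
      have hval : Complex.exp (-L w) * -φ w * G w + Complex.exp (-L w) * deriv G w = 0 := by
        have : φ w * G w = deriv G w := by
          simp only [hφdef, phiG]
          exact div_mul_cancel₀ _ (hne w hw)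
        rw [← this]; ring
      rw [hval] at h2
      exact h2.hasDerivWithinAt
    intro z hz
    have hconst := (convex_ball (0:ℂ) r).norm_image_sub_le_of_norm_hasDerivWithin_le
      (C := 0) hq (fun x _ => by simp) h0mem hz
    simp only [norm_zero, zero_mul, norm_le_zero_iff, sub_eq_zero] at hconst
    have h0 : Complex.exp (-L 0) * G 0 = 1 := by
      simp [hLdef, LG_zero, hG0]
    rw [h0] at hconst
    have hexpne : Complex.exp (-L z) ≠ 0 := Complex.exp_ne_zero _
    have := hconst
    rw [Complex.exp_neg] at this
    field_simp at this
    exact this.symm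
  have hGnorm : ∀ z ∈ ball (0:ℂ) r, ‖G z‖ = Real.exp ((L z).re) := by
    intro z hz
    rw [← hexp z hz, Complex.norm_exp]
  -- the function D = H' and P = z * D
  set D : ℂ → ℂ := fun w => Complex.exp (L w / (μ:ℝ)) * (φ w / (μ:ℝ)) with hDdef
  set P : ℂ → ℂ := fun w => w * D w with hPdef
  have hHd : ∀ w ∈ ball (0:ℂ) r, HasDerivAt (fun w => Complex.exp (L w / (μ:ℝ))) (D w) w := by
    intro w hw
    exact ((hLd w hw).div_const ((μ:ℝ):ℂ)).cexp
  have hLdiff : DifferentiableOn ℂ L (ball (0:ℂ) r) := fun w hw =>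
    ((hLd w hw).differentiableAt).differentiableWithinAt
  have hφdiffOn : DifferentiableOn ℂ φ (ball (0:ℂ) r) := fun w hw =>
    (hφdiff w hw).differentiableWithinAt
  have hDdiff : DifferentiableOn ℂ D (ball (0:ℂ) r) :=
    ((hLdiff.div_const _).cexp).mul (hφdiffOn.div_const _)
  have hPdiff : DifferentiableOn ℂ P (ball (0:ℂ) r) := differentiableOn_id.mul hDdiff
  have hP0 : P 0 = 0 := by simp [hPdef]
  -- norm of P is < 1/2
  have hPnorm : ∀ w ∈ ball (0:ℂ) r, ‖P w‖ < 1/2 := by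
    intro w hw
    have hkey := hsm w (hBr hw)
    set a := (L w).re with hadef
    have hxpow : ‖G w‖ ^ ((1-μ)/μ) = Real.exp (a/μ) / Real.exp a := by
      rw [hGnorm w hw, Real.rpow_def_of_pos (Real.exp_pos a), Real.log_exp, ← Real.exp_sub]
      congr 1
      field_simp
    rw [hxpow] at hkey
    have hPw : ‖P w‖ = Real.exp (a/μ) / Real.exp a * ‖w * deriv G w‖ / μ := by
      have hden : ‖Complex.exp (L w / (μ:ℝ))‖ = Real.exp (a/μ) := by
        rw [Complex.norm_exp, Complex.div_ofReal_re]
      simp only [hPdef, hDdef, hφdef, phiG]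
      rw [norm_mul, norm_mul, norm_div, norm_div, hden, hGnorm w hw, norm_mul,
        Complex.norm_real, Real.norm_eq_abs, _root_.abs_of_pos hμ0]
      field_simp
      ring
    rw [hPw]
    rw [div_lt_iff₀ hμ0]
    linarith
  -- Schwarz
  have hPle : ∀ z ∈ ball (0:ℂ) r, ‖P z‖ ≤ ‖z‖ / (2*r) := by
    intro z hz
    have hmaps : Set.MapsTo P (ball (0:ℂ) r) (ball (P 0) (1/2)) := by
      intro w hw
      rw [hP0, mem_ball_zero_iff]
      exact hPnorm w hw
    have := Complex.dist_le_div_mul_dist_of_mapsTo_ball hPdiff (hmaps.mono_right ball_subset_closedBall) hz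
    rw [hP0, dist_zero_right, dist_zero_right] at this
    calc ‖P z‖ ≤ 1/2/r * ‖z‖ := this
    _ = ‖z‖ / (2*r) := by ring
  -- bound on D
  have hDle : ∀ w ∈ ball (0:ℂ) r, ‖D w‖ ≤ 1/(2*r) := by
    intro w hw
    rcases eq_or_ne w 0 with rfl | hw0
    · -- limit argument
      have hcont : ContinuousAt (fun w => ‖D w‖) 0 :=
        ((hDdiff.continuousOn.continuousAt (isOpen_ball.mem_nhds h0mem)).norm)
      refine le_of_tendsto (hcont.tendsto.mono_left nhdsWithin_le_nhds :
        Filter.Tendsto _ (nhdsWithin (0:ℂ) {(0:ℂ)}ᶜ) _) ?_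
      filter_upwards [mem_nhdsWithin_of_mem_nhds (isOpen_ball.mem_nhds h0mem),
        self_mem_nhdsWithin] with ζ hζ hζ0
      have hζn : 0 < ‖ζ‖ := norm_pos_iff.mpr hζ0
      have h1 : ‖P ζ‖ = ‖ζ‖ * ‖D ζ‖ := by rw [hPdef]; exact norm_mul _ _
      have h2 := hPle ζ hζ
      rw [h1] at h2
      have h3 : ‖ζ‖ * ‖D ζ‖ ≤ ‖ζ‖ * (1/(2*r)) := by
        calc ‖ζ‖ * ‖D ζ‖ ≤ ‖ζ‖ / (2*r) := h2
        _ = ‖ζ‖ * (1/(2*r)) := by ring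
      exact le_of_mul_le_mul_left h3 hζn
    · have hζn : 0 < ‖w‖ := norm_pos_iff.mpr hw0
      have h1 : ‖P w‖ = ‖w‖ * ‖D w‖ := by rw [hPdef]; exact norm_mul _ _
      have h2 := hPle w hw
      rw [h1] at h2
      have h3 : ‖w‖ * ‖D w‖ ≤ ‖w‖ * (1/(2*r)) := by
        calc ‖w‖ * ‖D w‖ ≤ ‖w‖ / (2*r) := h2
        _ = ‖w‖ * (1/(2*r)) := by ring
      exact le_of_mul_le_mul_left h3 hζn
  -- MVT bound on H - 1
  have hHle : ∀ z ∈ ball (0:ℂ) r, ‖Complex.exp (L z / (μ:ℝ)) - 1‖ ≤ ‖z‖ / (2*r) := by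
    intro z hz
    have := (convex_ball (0:ℂ) r).norm_image_sub_le_of_norm_hasDerivWithin_le
      (fun w hw => (hHd w hw).hasDerivWithinAt) hDle h0mem hz
    have h0 : Complex.exp (L 0 / (μ:ℝ)) = 1 := by simp [hLdef, LG_zero]
    rw [h0, sub_zero] at this
    calc ‖Complex.exp (L z / (μ:ℝ)) - 1‖ ≤ 1/(2*r) * ‖z‖ := this
    _ = ‖z‖ / (2*r) := by ring
  intro z hz
  have hzn : ‖z‖ < r := mem_ball_zero_iff.mp hz
  -- bound on L z / μ
  have hLb : ‖L z / (μ:ℝ)‖ ≤ ‖z‖ / r := by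
    have hrep : L z / ((μ:ℝ):ℂ) = ∫ t in (0:ℝ)..1, z * φ ((t:ℂ)*z) / ((μ:ℝ):ℂ) := by
      rw [hLdef]
      exact (intervalIntegral.integral_div _ _).symm
    rw [hrep]
    have hbound : ∀ t ∈ Set.uIoc (0:ℝ) 1, ‖z * φ ((t:ℂ)*z) / ((μ:ℝ):ℂ)‖ ≤ ‖z‖/r := by
      intro t ht
      rw [Set.uIoc_of_le zero_le_one] at ht
      have ht0 : 0 < t := ht.1
      have ht1 : t ≤ 1 := ht.2
      set w := (t:ℂ) * z with hwdef
      have hwmem : w ∈ ball (0:ℂ) r := by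
        rw [mem_ball_zero_iff, hwdef, norm_mul, Complex.norm_real, Real.norm_eq_abs,
          _root_.abs_of_pos ht0]
        nlinarith [norm_nonneg z]
      have hwn : ‖w‖ = t * ‖z‖ := by
        rw [hwdef, norm_mul, Complex.norm_real, Real.norm_eq_abs, _root_.abs_of_pos ht0]
      set m := ‖Complex.exp (L w / (μ:ℝ))‖ with hmdef
      have hm : 1/2 ≤ m := by
        have h1 := hHle w hwmem
        have h2 : ‖w‖/(2*r) < 1/2 := by
          rw [hwn]
          rw [div_lt_iff₀ (by linarith : (0:ℝ) < 2*r)]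
          nlinarith [norm_nonneg z]
        have h3 : (1:ℝ) - ‖w‖/(2*r) ≤ m := by
          have := norm_sub_norm_le (1 : ℂ) (Complex.exp (L w / (μ:ℝ)))
          rw [norm_one] at this
          have h4 : ‖(1:ℂ) - Complex.exp (L w / (μ:ℝ))‖ = ‖Complex.exp (L w / (μ:ℝ)) - 1‖ :=
            norm_sub_rev _ _
          rw [h4] at this
          linarith [h1, this]
        linarith
      have hPweq : ‖z * φ w / ((μ:ℝ):ℂ)‖ * (t * m) = ‖P w‖ := by
        simp only [hPdef, hDdef, norm_mul, norm_div]
        rw [hwn, ← hmdef]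
        ring
      have hPwle : ‖P w‖ ≤ t * ‖z‖ / (2*r) := by
        have := hPle w hwmem
        rwa [hwn] at this
      have htm : 0 < t * m := by nlinarith
      have h5 : ‖z * φ w / ((μ:ℝ):ℂ)‖ = ‖P w‖ / (t * m) := by
        rw [← hPweq]
        field_simp
      rw [h5]
      calc ‖P w‖ / (t * m) ≤ (t * ‖z‖ / (2*r)) / (t * (1/2)) := by
            refine div_le_div₀ (div_nonneg (mul_nonneg ht0.le (norm_nonneg z))
              (by linarith)) hPwle (by linarith) ?_
            exact mul_le_mul_of_nonneg_left hm (le_of_lt ht0)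
      _ = ‖z‖ / r := by field_simp
    have := intervalIntegral.norm_integral_le_of_norm_le_const hbound
    simpa using this
  refine ⟨hexp z hz, hHle z hz, hLb, ?_⟩
  -- lower bound on ‖G z‖
  have ha : (L z).re / μ = (L z / (μ:ℝ)).re := (Complex.div_ofReal_re _ _).symm
  have habs : |(L z / (μ:ℝ)).re| ≤ ‖z‖/r := by
    calc |(L z / (μ:ℝ)).re| ≤ ‖L z / (μ:ℝ)‖ := Complex.abs_re_le_norm _
    _ = ‖L z / (μ:ℝ)‖ := rfl
    _ ≤ ‖z‖/r := hLb
  have hzr : ‖z‖/r < 1 := by rw [div_lt_one hr0]; exact hzn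
  have hre : -1 ≤ (L z).re := by
    have h1 : -(1:ℝ) ≤ (L z / (μ:ℝ)).re := by
      have := neg_abs_le ((L z / (μ:ℝ)).re)
      linarith
    have h2 : (L z).re = μ * ((L z / (μ:ℝ)).re) := by
      rw [← ha]; field_simp
    rw [h2]
    nlinarith
  rw [hGnorm z hz]
  have h14 : (1/4 : ℝ) ≤ Real.exp (-1) := by
    have h4 : Real.exp 1 ≤ 4 := by
      have := Real.exp_one_lt_d9
      linarith
    have hprod : Real.exp (-1) * Real.exp 1 = 1 := by
      rw [← Real.exp_add]; norm_num
    nlinarith [Real.exp_pos (-1)]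
  exact le_trans h14 (Real.exp_le_exp.mpr hre)

theorem strongly_starlike_criterion (f G : ℂ → ℂ)
    (hf : DifferentiableOn ℂ f (ball (0:ℂ) 1))
    (hf0 : f 0 = 0) (hf'0 : deriv f 0 = 1)
    (hfne : ∀ z ∈ ball (0:ℂ) 1, z ≠ 0 → f z ≠ 0)
    (hG : DifferentiableOn ℂ G (ball (0:ℂ) 1))
    (hG0 : G 0 = 1)
    (hGf : ∀ z ∈ ball (0:ℂ) 1, z ≠ 0 → G z = z * deriv f z / f z)
    (α β : ℝ) (hα : 0 ≤ α) (hβ : 0 < β) (μ : ℝ) (hμ : μ = β / (α + β))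
    (hineq : ∀ z ∈ ball (0:ℂ) 1,
      ‖G z‖ ^ α * ‖z * deriv G z‖ ^ β < (μ/2 : ℝ) ^ β) :
    ∃ H : ℂ → ℂ, DifferentiableOn ℂ H (ball (0:ℂ) 1) ∧ H 0 = 1 ∧
      (∀ z ∈ ball (0:ℂ) 1, H z ^ (μ : ℂ) = G z) ∧
      (∀ z ∈ ball (0:ℂ) 1, 0 < (H z).re) := by
  have hab : 0 < α + β := by linarith
  have hμ0 : 0 < μ := by rw [hμ]; positivity
  have hμ1 : μ ≤ 1 := by
    rw [hμ, div_le_one hab]; linarith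
  have hexps : (1 - μ)/μ = α/β := by
    rw [hμ]; field_simp; ring
  have hsm : ∀ z ∈ ball (0:ℂ) 1, ‖G z‖ ^ ((1-μ)/μ) * ‖z * deriv G z‖ < μ/2 := by
    intro z hz
    have h := hineq z hz
    have hx : (0:ℝ) ≤ ‖G z‖ := norm_nonneg _
    have hy : (0:ℝ) ≤ ‖z * deriv G z‖ := norm_nonneg _
    have hμ2 : (0:ℝ) < μ/2 := by linarith
    rw [hexps]
    have h2 : (‖G z‖ ^ α * ‖z * deriv G z‖ ^ β) ^ (1/β) < ((μ/2 : ℝ) ^ β) ^ (1/β) :=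
      Real.rpow_lt_rpow (by positivity) h (by positivity)
    have h3 : ((μ/2 : ℝ) ^ β) ^ (1/β) = μ/2 := by
      rw [← Real.rpow_mul hμ2.le, mul_one_div, div_self hβ.ne', Real.rpow_one]
    have h4 : (‖G z‖ ^ α * ‖z * deriv G z‖ ^ β) ^ (1/β)
        = ‖G z‖ ^ (α/β) * ‖z * deriv G z‖ := by
      rw [Real.mul_rpow (by positivity) (by positivity), ← Real.rpow_mul hx,
        ← Real.rpow_mul hy, mul_one_div, mul_one_div, div_self hβ.ne', Real.rpow_one]
    rw [h4, h3] at h2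
    exact h2
  -- bootstrap
  set S : Set ℝ := {r : ℝ | 0 < r ∧ r ≤ 1 ∧ ∀ z ∈ ball (0:ℂ) r, G z ≠ 0} with hSdef
  have hG0c : ContinuousAt G 0 :=
    (hG.differentiableAt (isOpen_ball.mem_nhds (by simp))).continuousAt
  obtain ⟨δ, hδ0, hδ⟩ := Metric.continuousAt_iff.mp hG0c (1/2) (by norm_num)
  have hr0S : min (δ/2) (1/2) ∈ S := by
    refine ⟨lt_min (by linarith) (by norm_num), le_trans (min_le_right _ _) (by norm_num), ?_⟩
    intro z hz
    have hzd : dist z 0 < δ := by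
      have h1 := mem_ball.mp hz
      have h2 : min (δ/2) (1/2) ≤ δ/2 := min_le_left _ _
      linarith
    have h3 := hδ hzd
    rw [hG0] at h3
    intro h0
    rw [h0] at h3
    simp only [dist_zero_left, norm_one] at h3
    norm_num at h3
  have hSbdd : BddAbove S := ⟨1, fun x hx => hx.2.1⟩
  have hSne : S.Nonempty := ⟨_, hr0S⟩
  set R := sSup S with hRdef
  have hR1 : R ≤ 1 := csSup_le hSne (fun x hx => hx.2.1)
  have hR0 : 0 < R := lt_of_lt_of_le (lt_min (by linarith) (by norm_num)) (le_csSup hSbdd hr0S)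
  have hRball : ∀ z ∈ ball (0:ℂ) R, (1/4:ℝ) ≤ ‖G z‖ := by
    intro z hz
    have hzR : ‖z‖ < R := mem_ball_zero_iff.mp hz
    obtain ⟨r, hrS, hzr⟩ := exists_lt_of_lt_csSup hSne hzR
    exact (key G hG hG0 μ hμ0 hμ1 hsm r hrS.1 hrS.2.1 hrS.2.2 z
      (mem_ball_zero_iff.mpr hzr)).2.2.2
  have hR : R = 1 := by
    by_contra hRne
    have hRlt : R < 1 := lt_of_le_of_ne hR1 hRne
    set U := ball (0:ℂ) 1 ∩ G ⁻¹' ({0}ᶜ) with hUdef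
    have hUopen : IsOpen U :=
      hG.continuousOn.isOpen_inter_preimage isOpen_ball (isOpen_compl_singleton)
    have hKU : closedBall (0:ℂ) R ⊆ U := by
      intro z hz
      have hz1 : z ∈ ball (0:ℂ) 1 := by
        rw [mem_ball_zero_iff]
        exact lt_of_le_of_lt (mem_closedBall_zero_iff.mp hz) hRlt
      refine ⟨hz1, ?_⟩
      have hzc : z ∈ closure (ball (0:ℂ) R) := by
        rw [closure_ball (0:ℂ) (ne_of_gt hR0)]; exact hz
      have hGc : ContinuousWithinAt (fun w => ‖G w‖) (ball (0:ℂ) R) z :=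
        ((hG.differentiableAt (isOpen_ball.mem_nhds hz1)).continuousAt.norm).continuousWithinAt
      haveI hnb : (nhdsWithin z (ball (0:ℂ) R)).NeBot :=
        mem_closure_iff_nhdsWithin_neBot.mp hzc
      have hlim : (1/4:ℝ) ≤ ‖G z‖ := by
        refine ge_of_tendsto hGc.tendsto ?_
        filter_upwards [self_mem_nhdsWithin] with w hw
        exact hRball w hw
      simp only [Set.mem_preimage, Set.mem_compl_iff, Set.mem_singleton_iff]
      intro h0
      rw [h0] at hlim
      norm_num at hlim
    obtain ⟨ε, hε0, hεsub⟩ := (isCompact_closedBall (0:ℂ) R).exists_cthickening_subset_open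
      hUopen hKU
    have hthick : closedBall (0:ℂ) (ε + R) ⊆ U := by
      rw [← cthickening_closedBall hε0.le hR0.le (0:ℂ)]
      exact hεsub
    have hr'S : min 1 (ε + R) ∈ S := by
      refine ⟨lt_min one_pos (by linarith), min_le_left _ _, ?_⟩
      intro z hz
      have hz' : z ∈ closedBall (0:ℂ) (ε + R) := by
        rw [mem_closedBall_zero_iff]
        exact le_of_lt (lt_of_lt_of_le (mem_ball_zero_iff.mp hz) (min_le_right _ _))
      exact (hthick hz').2
    have h1 : min 1 (ε + R) ≤ R := le_csSup hSbdd hr'S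
    have h2 : R < min 1 (ε + R) := lt_min hRlt (by linarith)
    linarith
  have hne1 : ∀ z ∈ ball (0:ℂ) 1, G z ≠ 0 := by
    intro z hz
    have h14 := hRball z (by rwa [hR])
    intro h0
    rw [h0] at h14
    norm_num at h14
  have hkey := key G hG hG0 μ hμ0 hμ1 hsm 1 one_pos le_rfl hne1
  refine ⟨fun z => Complex.exp (LG G z / (μ:ℝ)), ?_, ?_, ?_, ?_⟩
  · have hLdiff : DifferentiableOn ℂ (LG G) (ball (0:ℂ) 1) := fun w hw =>
      ((LG_hasDerivAt G hG 1 le_rfl hne1 hw).differentiableAt).differentiableWithinAt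
    exact ((hLdiff.div_const _).cexp)
  · simp [LG_zero]
  · intro z hz
    obtain ⟨he, hH1, hLb, _⟩ := hkey z hz
    have hzn : ‖z‖ < 1 := mem_ball_zero_iff.mp hz
    have hIm : |(LG G z / ((μ:ℝ):ℂ)).im| < Real.pi := by
      calc |(LG G z / ((μ:ℝ):ℂ)).im| ≤ ‖LG G z / ((μ:ℝ):ℂ)‖ :=
            Complex.abs_im_le_norm _
      _ = ‖LG G z / ((μ:ℝ):ℂ)‖ := rfl
      _ ≤ ‖z‖/1 := hLb
      _ < Real.pi := by rw [div_one]; linarith [Real.pi_gt_three]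
    have hIm' := abs_lt.mp hIm
    rw [Complex.cpow_def_of_ne_zero (Complex.exp_ne_zero _)]
    rw [Complex.log_exp (by linarith [hIm'.1]) (le_of_lt hIm'.2)]
    rw [← he]
    congr 1
    have hμC : ((μ:ℝ):ℂ) ≠ 0 := by simpa using ne_of_gt hμ0
    field_simp
  · intro z hz
    obtain ⟨_, hH1, _, _⟩ := hkey z hz
    have hzn : ‖z‖ < 1 := mem_ball_zero_iff.mp hz
    have hH1' : ‖Complex.exp (LG G z / ((μ:ℝ):ℂ)) - 1‖ ≤ ‖z‖/2 := by
      have : ‖z‖/(2*1) = ‖z‖/2 := by ring_nf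
      rw [← this]
      exact hH1
    have h1 : |(Complex.exp (LG G z / ((μ:ℝ):ℂ)) - 1).re| ≤ ‖z‖/2 := by
      calc |(Complex.exp (LG G z / ((μ:ℝ):ℂ)) - 1).re|
          ≤ ‖Complex.exp (LG G z / ((μ:ℝ):ℂ)) - 1‖ := Complex.abs_re_le_norm _
      _ = ‖Complex.exp (LG G z / ((μ:ℝ):ℂ)) - 1‖ := rfl
      _ ≤ ‖z‖/2 := hH1'
    have h2 : (Complex.exp (LG G z / ((μ:ℝ):ℂ))).re
        = 1 + (Complex.exp (LG G z / ((μ:ℝ):ℂ)) - 1).re := by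
      simp
    have h3 := (abs_le.mp h1).1
    simp only []
    rw [h2]
    linarith
end
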